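/- arXiv:2202.07629 — 4 statements merged into one kernel-verified Lean document; each statement's English description precedes it below -/
import Mathlib

section
/- For every complete NFA A over a finite alphabet Σ, the ω-language of the Büchi automaton A_f is L(A_f) = { w₁ $ w₁' $ w₂ $ w₂' $ w₃ $ w₃' $ ⋯ ∈ Σ_$^ω : for all i ≥ 1, wᵢ ∈ Σ_$^* and wᵢ' ∈ L(A) }. -/
open scoped Classical ENNReal

/-! ## ω-words -/

/-- Cons a letter onto an ω-word. -/
def wcons {L : Type*} (σ : L) (α : ℕ → L) : ℕ → L
  | 0 => σ
  | n + 1 => α n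

/-- Prepend a finite word to an ω-word. -/
def wApp {L : Type*} : List L → (ℕ → L) → (ℕ → L)
  | [], α => α
  | x :: xs, α => wcons x (wApp xs α)

/-- The length-`n` prefix of an ω-word, as a list. -/
def prefList {L : Type*} (α : ℕ → L) (n : ℕ) : List L :=
  List.ofFn (fun i : Fin n => α i)

/-- The starting position of the `i`-th block in an infinite concatenation of
finite blocks `u 0, u 1, u 2, …`. -/
def blockStart {L : Type*} (u : ℕ → List L) (i : ℕ) : ℕ :=
  ∑ j ∈ Finset.range i, (u j).length

/-- The ω-word `α` is the infinite concatenation of the finite blocks `u 0, u 1, …`. -/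
def OmegaConcatOf {L : Type*} (u : ℕ → List L) (α : ℕ → L) : Prop :=
  ∀ (i k : ℕ) (h : k < (u i).length), α (blockStart u i + k) = (u i).get ⟨k, h⟩

/-! ## Nondeterministic Büchi word automata -/

/-- A nondeterministic Büchi word automaton (NBW) with alphabet `L` and state space `Q`:
an initial state, a transition function and a set of accepting (final) states. -/
structure NBW (L : Type*) (Q : Type*) where
  init : Q
  step : Q → L → Set Q
  acc : Set Q

namespace NBW

variable {L Q : Type*}

/-- An NBW is complete if every state has a successor on every letter. -/
def Complete (N : NBW L Q) : Prop := ∀ q σ, (N.step q σ).Nonempty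

/-- `r` is a run of `N` on the ω-word `α` starting in state `q`. -/
def IsRunFrom (N : NBW L Q) (q : Q) (α : ℕ → L) (r : ℕ → Q) : Prop :=
  r 0 = q ∧ ∀ i, r (i + 1) ∈ N.step (r i) (α i)

/-- A run is accepting if some accepting state occurs infinitely often in it. -/
def Accepting (N : NBW L Q) (r : ℕ → Q) : Prop :=
  ∃ q ∈ N.acc, ∀ n, ∃ m, n ≤ m ∧ r m = q

/-- The ω-language of an NBW: the set of ω-words having an accepting run. -/
def lang (N : NBW L Q) : Set (ℕ → L) :=
  {α | ∃ r, N.IsRunFrom N.init α r ∧ N.Accepting r}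

/-- The same NBW with initial state `q` (denoted `C_q` in the paper). -/
def withInit (N : NBW L Q) (q : Q) : NBW L Q := ⟨q, N.step, N.acc⟩

end NBW

/-! ## NFAs on finite words -/

/-- A nondeterministic finite automaton with a single initial state. -/
structure NFAo (L : Type*) (Q : Type*) where
  init : Q
  step : Q → L → Set Q
  acc : Set Q

namespace NFAo

variable {L Q : Type*}

/-- An NFA is complete if every state has a successor on every letter. -/
def Complete (M : NFAo L Q) : Prop := ∀ q σ, (M.step q σ).Nonempty

/-- The set of states reachable from a set of states on a finite word. -/
def evalFrom (M : NFAo L Q) (S : Set Q) (w : List L) : Set Q :=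
  w.foldl (fun S σ => ⋃ q ∈ S, M.step q σ) S

/-- The language of an NFA: finite words having a run from the initial state ending
in an accepting state. -/
def lang (M : NFAo L Q) : Set (List L) :=
  {w | ∃ q ∈ M.evalFrom {M.init} w, q ∈ M.acc}

/-! ### The `A_f` construction
The fresh letter `$` is modelled by `none : Option L` and the fresh state `f`
by `none : Option Q`. -/

/-- Transitions of `A_f` out of an original state `q`. -/
def dollarStepAux (M : NFAo L Q) (q : Q) : Option L → Set (Option Q)
  | some σ => some '' M.step q σ
  | none => if q ∈ M.acc then {none} else {some M.init}

/-- The transition function of `A_f`: on the fresh state `f` it behaves like the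
initial state. -/
def dollarStep (M : NFAo L Q) : Option Q → Option L → Set (Option Q)
  | some q, σ => M.dollarStepAux q σ
  | none, σ => M.dollarStepAux M.init σ

/-- The Büchi automaton `A_f` obtained from the complete NFA `A` by adding the fresh
letter `$ = none` and the fresh accepting state `f = none`. -/
def dollar (M : NFAo L Q) : NBW (Option L) (Option Q) :=
  ⟨some M.init, M.dollarStep, {none}⟩

end NFAo

/-- The one-state complete NFA over `L` whose single state is both initial and
accepting; its language is all of `L*`. -/
def unitNFA (L : Type*) : NFAo L Unit := ⟨(), fun _ _ => {()}, Set.univ⟩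

/-! ## The fork construction -/

/-- The state space of `fork(A_f)`: the states of `A_f` (where `af none` is the state `f`),
the states `b0 = q₀'` and `bf = f'` of `B_f` (for the one-state universal NFA `B`),
and the three fresh states `q_F`, `q_A`, `q_B`. -/
inductive ForkState (Q : Type*) where
  | af : Option Q → ForkState Q
  | b0 : ForkState Q
  | bf : ForkState Q
  | qF : ForkState Q
  | qA : ForkState Q
  | qB : ForkState Q
  deriving DecidableEq, Fintype

/-- The transition function of `fork(A_f)`. -/
def forkStep {L Q : Type*} (M : NFAo L Q) :
    ForkState Q → Option L → Set (ForkState Q)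
  | .af q, σ => ForkState.af '' M.dollarStep q σ
  | .b0, some _ => {.b0}
  | .b0, none => {.bf}
  | .bf, some _ => {.b0}
  | .bf, none => {.bf}
  | .qF, _ => {.qA, .qB}
  | .qA, _ => {.af (some M.init)}
  | .qB, some _ => ∅
  | .qB, none => {.b0}

/-- The NBW `fork(A_f)` of the paper (for the complete NFA `A = M`). -/
def fork {L Q : Type*} (M : NFAo L Q) : NBW (Option L) (ForkState Q) :=
  ⟨.qF, forkStep M, {.af none, .bf}⟩

/-! ## Markov decision processes -/

/-- A state-labelled Markov decision process with states `S`, actions `A` and labels `L`: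
a partial probabilistic transition function and a labelling of states. -/
structure MDP (S A L : Type*) where
  prob : S → A → Option (PMF S)
  label : S → L

namespace MDP

variable {S A L : Type*}

/-- The action `a` is available (enabled) in state `s`. -/
def enabled (M : MDP S A L) (s : S) (a : A) : Prop := (M.prob s a).isSome

/-- Every state has at least one available action (assumed for all MDPs). -/
def NonBlocking (M : MDP S A L) : Prop := ∀ s, ∃ a, M.enabled s a

/-- An MDP is a Markov chain if every state has exactly one available action. -/
def IsMC (M : MDP S A L) : Prop := ∀ s, ∃! a, M.enabled s a

/-- A strategy: given a finite run (the past state-action pairs and the current state),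
a distribution over the actions available at the current state. -/
structure Strategy (M : MDP S A L) where
  act : List (S × A) → S → PMF A
  supp : ∀ h s, (∃ a, M.enabled s a) → ∀ a ∈ (act h s).support, M.enabled s a

/-- The probability that, starting from `s` with past history `hist`, the MDP controlled
by the strategy `μ` produces exactly the finite run `l` (a list of state-action pairs). -/
noncomputable def pathWeightAux (M : MDP S A L) (μ : M.Strategy) :
    List (S × A) → S → List (S × A) → ℝ≥0∞
  | _, _, [] => 1
  | hist, s, (s', a) :: rest =>
    if s' = s then
      μ.act hist s a *
        match rest with
        | [] => 1
        | (s'', _) :: _ =>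
          (match M.prob s a with
           | none => 0
           | some p => p s'') * pathWeightAux M μ (hist ++ [(s, a)]) s'' rest
    else 0

/-- `E` is a cylinder set at horizon `n`: membership only depends on the first `n`
state-action pairs of a run. -/
def IsCylinderAt {X : Type*} (E : Set (ℕ → X)) (n : ℕ) : Prop :=
  ∀ r r' : ℕ → X, prefList r n = prefList r' n → r ∈ E → r' ∈ E

/-- The probability of the horizon-`n` cylinder set `E` of runs, starting from `s₀`,
under strategy `μ`. -/
noncomputable def horizonProb [Fintype S] [Fintype A] (M : MDP S A L) (μ : M.Strategy)
    (s₀ : S) (n : ℕ) (E : Set (ℕ → S × A)) : ℝ≥0∞ :=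
  ∑ v : Fin n → S × A,
    if ∃ r ∈ E, prefList r n = List.ofFn v then pathWeightAux M μ [] s₀ (List.ofFn v)
    else 0

/-- The cylinder premeasure: defined on cylinder sets via finite-horizon probabilities
(and `∞` on non-cylinder sets). -/
noncomputable def preMeasure [Fintype S] [Fintype A] (M : MDP S A L) (μ : M.Strategy)
    (s₀ : S) (E : Set (ℕ → S × A)) : ℝ≥0∞ :=
  ⨅ (n : ℕ) (_ : IsCylinderAt E n), horizonProb M μ s₀ n E

theorem preMeasure_empty [Fintype S] [Fintype A] (M : MDP S A L) (μ : M.Strategy)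
    (s₀ : S) : preMeasure M μ s₀ ∅ = 0 := by
  refine le_antisymm ?_ zero_le
  have hcyl : IsCylinderAt (∅ : Set (ℕ → S × A)) 0 := fun r r' _ h => h.elim
  calc preMeasure M μ s₀ ∅ ≤ horizonProb M μ s₀ 0 ∅ := iInf₂_le 0 hcyl
    _ = 0 := by simp [horizonProb]

/-- The standard probability measure `Pr^μ_{s₀}` on the space of infinite runs
(as the Carathéodory outer measure extending the cylinder premeasure). -/
noncomputable def Pr [Fintype S] [Fintype A] (M : MDP S A L) (μ : M.Strategy) (s₀ : S) :
    MeasureTheory.OuterMeasure (ℕ → S × A) :=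
  MeasureTheory.OuterMeasure.ofFunction (preMeasure M μ s₀) (preMeasure_empty M μ s₀)

/-- The product MDP `M × N` of an MDP and an NBW. -/
noncomputable def prod {Q : Type*} (M : MDP S A L) (N : NBW L Q) : MDP (S × Q) (A × Q) L where
  prob := fun sq aq =>
    if aq.2 ∈ N.step sq.2 (M.label sq.1) then
      (M.prob sq.1 aq.1).map (PMF.map fun s' => (s', aq.2))
    else none
  label := fun sq => M.label sq.1

end MDP

/-- The semantic satisfaction probability `PSem_N^M(s₀)`: the optimal probability that
the label sequence of a run of `M` from `s₀` is in the language of `N`. -/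
noncomputable def PSem {S A L Q : Type*} [Fintype S] [Fintype A] (N : NBW L Q)
    (M : MDP S A L) (s₀ : S) : ℝ≥0∞ :=
  ⨆ μ : M.Strategy, MDP.Pr M μ s₀ {r | (fun n => M.label (r n).1) ∈ N.lang}

/-- The syntactic satisfaction probability `PSyn_N^M(s₀)`: the optimal probability that
a run of the product MDP `M × N` from `(s₀, q₀)` visits `F^× = S × F` infinitely often. -/
noncomputable def PSyn {S A L Q : Type*} [Fintype S] [Fintype A] [Fintype Q] (N : NBW L Q)
    (M : MDP S A L) (s₀ : S) : ℝ≥0∞ :=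
  ⨆ μ : (M.prod N).Strategy,
    MDP.Pr (M.prod N) μ (s₀, N.init) {r | ∀ n, ∃ m, n ≤ m ∧ (r m).1.2 ∈ N.acc}

namespace NBW

/-- An NBW is good-for-MDPs (GFM) if syntactic and semantic satisfaction probabilities
coincide for every finite MDP and every initial state. -/
def GFM {L Q : Type*} [Fintype Q] (N : NBW L Q) : Prop :=
  ∀ (S A : Type) [Fintype S] [Fintype A] (M : MDP S A L),
    M.NonBlocking → ∀ s₀ : S, PSyn N M s₀ = PSem N M s₀

/-- An NBW is qualitatively good-for-MDPs (QGFM) if, whenever the semantic satisfaction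
probability is 1, so is the syntactic one, for every finite MDP and initial state. -/
def QGFM {L Q : Type*} [Fintype Q] (N : NBW L Q) : Prop :=
  ∀ (S A : Type) [Fintype S] [Fintype A] (M : MDP S A L),
    M.NonBlocking → ∀ s₀ : S, PSem N M s₀ = 1 → PSyn N M s₀ = 1

end NBW

/-! ## Safety automata -/

/-- A safety automaton: an automaton in which every state is accepting, so only the
initial state and the transitions matter. -/
structure SafetyAut (L Q : Type*) where
  init : Q
  step : Q → L → Set Q

/-- The language of a safety automaton: the ω-words on which it has an infinite run. -/
def SafetyAut.lang {L Q : Type*} (T : SafetyAut L Q) : Set (ℕ → L) :=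
  {α | ∃ r : ℕ → Q, r 0 = T.init ∧ ∀ i, r (i + 1) ∈ T.step (r i) (α i)}

/-- A safety automaton is good-for-games (GFG) if its nondeterminism can be resolved
based only on the history: a strategy `g` picks, for each finite word, a current state,
following a transition on every finite word that is a prefix of a word of the language. -/
def SafetyAut.GFG {L Q : Type*} (T : SafetyAut L Q) : Prop :=
  ∃ g : List L → Q, g [] = T.init ∧
    ∀ (w : List L) (σ : L),
      (∃ α ∈ T.lang, prefList α (w.length + 1) = w ++ [σ]) →
      g (w ++ [σ]) ∈ T.step (g w) σ

namespace NBW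

variable {L Q : Type*}

/-- A state `q` of `C` is productive if `L(C_q) ≠ ∅`. -/
def Productive (C : NBW L Q) (q : Q) : Prop := (C.withInit q).lang.Nonempty

/-- A state `q` of `C` is a QGFM state if `C_q` is QGFM. -/
def QGFMState [Fintype Q] (C : NBW L Q) (q : Q) : Prop := (C.withInit q).QGFM

/-- A transition `(q, σ, r)` of `C` is residual if `L(C_r) = σ⁻¹ L(C_q)`. -/
def ResidualTrans (C : NBW L Q) (q : Q) (σ : L) (r : Q) : Prop :=
  r ∈ C.step q σ ∧ (C.withInit r).lang = {α | wcons σ α ∈ (C.withInit q).lang}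

/-- The safety automaton `S` associated with the candidate NBW `C`: its states are the
productive QGFM states of `C` and its transitions are the residual transitions of `C`
between such states. -/
def safetyS [Fintype Q] (C : NBW L Q) : SafetyAut L Q :=
  ⟨C.init, fun q σ =>
    {r | (C.Productive q ∧ C.QGFMState q) ∧ (C.Productive r ∧ C.QGFMState r) ∧
      C.ResidualTrans q σ r}⟩

/-- The safety automaton `T` associated with the candidate NBW `C`: its states are the
productive states of `C` and its transitions are all transitions of `C` between them. -/
def safetyT (C : NBW L Q) : SafetyAut L Q :=
  ⟨C.init, fun q σ => {r | C.Productive q ∧ C.Productive r ∧ r ∈ C.step q σ}⟩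

end NBW

/-! ### Auxiliary lemmas for `dollar_lang` -/

namespace DollarAux

variable {Γ Q : Type}

lemma evalFrom_of_run (A : NFAo Γ Q) : ∀ (w : List Γ) (S : Set Q) (q : ℕ → Q), q 0 ∈ S →
    (∀ j (h : j < w.length), q (j+1) ∈ A.step (q j) w[j]) →
    q w.length ∈ A.evalFrom S w := by
  intro w
  induction w with
  | nil => intro S q h0 _; simpa [NFAo.evalFrom] using h0
  | cons σ w ih =>
    intro S q h0 hstep
    have h1 : q 1 ∈ ⋃ p ∈ S, A.step p σ := by
      refine Set.mem_biUnion h0 ?_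
      exact hstep 0 (by simp)
    have := ih (⋃ p ∈ S, A.step p σ) (fun n => q (n+1)) h1 (by
      intro j hj
      exact hstep (j+1) (by simpa using Nat.succ_lt_succ hj))
    simpa [NFAo.evalFrom] using this

lemma run_of_evalFrom (A : NFAo Γ Q) : ∀ (w : List Γ) (S : Set Q) (x : Q),
    x ∈ A.evalFrom S w →
    ∃ q : ℕ → Q, q 0 ∈ S ∧ (∀ j (h : j < w.length), q (j+1) ∈ A.step (q j) w[j]) ∧
      q w.length = x := by
  intro w
  induction w with
  | nil => intro S x hx; exact ⟨fun _ => x, by simpa [NFAo.evalFrom] using hx, by simp, rfl⟩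
  | cons σ w ih =>
    intro S x hx
    obtain ⟨q, h0, hstep, hlast⟩ := ih (⋃ p ∈ S, A.step p σ) x (by simpa [NFAo.evalFrom] using hx)
    obtain ⟨p, hp, hq0⟩ := by simpa using h0
    refine ⟨fun n => match n with | 0 => p | n+1 => q n, hp, ?_, hlast⟩
    intro j hj
    match j with
    | 0 => simpa using hq0
    | j+1 => simpa using hstep j (by simpa using Nat.lt_of_succ_lt_succ hj)

lemma run_of_mem_lang (A : NFAo Γ Q) {w : List Γ} (hw : w ∈ A.lang) :
    ∃ q : ℕ → Q, q 0 = A.init ∧ (∀ j (h : j < w.length), q (j+1) ∈ A.step (q j) w[j]) ∧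
      q w.length ∈ A.acc := by
  obtain ⟨x, hx, hacc⟩ := hw
  obtain ⟨q, h0, hstep, hlast⟩ := run_of_evalFrom A w {A.init} x hx
  exact ⟨q, h0, hstep, hlast ▸ hacc⟩

lemma mem_lang_of_run (A : NFAo Γ Q) {w : List Γ} (q : ℕ → Q) (h0 : q 0 = A.init)
    (hstep : ∀ j (h : j < w.length), q (j+1) ∈ A.step (q j) w[j])
    (hacc : q w.length ∈ A.acc) : w ∈ A.lang :=
  ⟨q w.length, evalFrom_of_run A w {A.init} q (by simp [h0]) hstep, hacc⟩

section blockget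
variable {X Y : Type*}

lemma block_length (w : List X) (w' : List Y) (f : Y → X) (d : X) :
    (w ++ [d] ++ w'.map f ++ [d]).length = w.length + w'.length + 2 := by
  simp; omega

lemma block_get_left (w : List X) (w' : List Y) (f : Y → X) (d : X) (k : ℕ)
    (h : k < w.length) (h2 : k < (w ++ [d] ++ w'.map f ++ [d]).length) :
    (w ++ [d] ++ w'.map f ++ [d])[k] = w[k] := by
  rw [List.getElem_append_left (by simp; omega), List.getElem_append_left (by simp; omega),
    List.getElem_append_left h]

lemma block_get_dollar1 (w : List X) (w' : List Y) (f : Y → X) (d : X)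
    (h2 : w.length < (w ++ [d] ++ w'.map f ++ [d]).length) :
    (w ++ [d] ++ w'.map f ++ [d])[w.length] = d := by
  rw [List.getElem_append_left, List.getElem_append_left (by simp),
    List.getElem_append_right (by simp)]
  · simp
  · simp

lemma block_get_mid (w : List X) (w' : List Y) (f : Y → X) (d : X) (j : ℕ)
    (h : j < w'.length) (h2 : w.length + 1 + j < (w ++ [d] ++ w'.map f ++ [d]).length) :
    (w ++ [d] ++ w'.map f ++ [d])[w.length + 1 + j] = f w'[j] := by
  rw [List.getElem_append_left (by simp; omega), List.getElem_append_right (by simp)]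
  simp

lemma block_get_dollar2 (w : List X) (w' : List Y) (f : Y → X) (d : X)
    (h2 : w.length + 1 + w'.length < (w ++ [d] ++ w'.map f ++ [d]).length) :
    (w ++ [d] ++ w'.map f ++ [d])[w.length + 1 + w'.length] = d := by
  rw [List.getElem_append_right (by simp; omega)]
  simp

end blockget

lemma dollarStep_some (A : NFAo Γ Q) (x : Option Q) (σ : Γ) :
    A.dollarStep x (some σ) = some '' A.step (x.getD A.init) σ := by
  cases x <;> rfl

lemma dollarStep_none (A : NFAo Γ Q) (x : Option Q) :
    A.dollarStep x none = if x.getD A.init ∈ A.acc then {none} else {some A.init} := by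
  cases x <;> rfl

lemma mem_lang_sub (A : NFAo Γ Q) (α : ℕ → Option Γ) (hα : α ∈ A.dollar.lang) :
    ∃ (w : ℕ → List (Option Γ)) (w' : ℕ → List Γ),
      (∀ i, w' i ∈ A.lang) ∧
      OmegaConcatOf (fun i => w i ++ [none] ++ (w' i).map some ++ [none]) α := by
  classical
  obtain ⟨r, ⟨hr0, hrstep⟩, qa, hqa, hinf⟩ := hα
  have hqa' : qa = none := hqa
  subst hqa'
  have hstep' : ∀ m, r (m+1) ∈ A.dollarStep (r m) (α m) := hrstep
  have hα_none : ∀ m, r (m+1) = none → α m = none := by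
    intro m h
    cases hαm : α m with
    | none => rfl
    | some σ =>
      have h2 := hstep' m
      rw [h, hαm, dollarStep_some] at h2
      obtain ⟨y, -, hy⟩ := h2
      exact absurd hy (by simp)
  have hacc_prev : ∀ m, r (m+1) = none → (r m).getD A.init ∈ A.acc := by
    intro m h
    have h2 := hα_none m h
    have h3 := hstep' m
    rw [h, h2, dollarStep_none] at h3
    by_contra hc
    rw [if_neg hc] at h3
    simp at h3
  have hF2 : ∀ m, α m = none → r (m+1) = none ∨ r (m+1) = some A.init := by
    intro m h
    have h3 := hstep' m
    rw [h, dollarStep_none] at h3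
    split at h3
    · exact Or.inl (by simpa using h3)
    · exact Or.inr (by simpa using h3)
  have hstepq : ∀ j σ, α j = some σ →
      ((r (j+1)).getD A.init) ∈ A.step ((r j).getD A.init) σ ∧
        r (j+1) = some ((r (j+1)).getD A.init) := by
    intro j σ hj
    have h3 := hstep' j
    rw [hj, dollarStep_some] at h3
    obtain ⟨y, hy, hy2⟩ := h3
    rw [← hy2]
    exact ⟨hy, rfl⟩
  have hext : ∀ n, ∃ p e, n < p ∧ p < e ∧ α p = none ∧ α e = none ∧
      ∃ w' : List Γ, w' ∈ A.lang ∧ e = p + 1 + w'.length ∧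
        ∀ j (h : j < w'.length), α (p+1+j) = some w'[j] := by
    intro n
    obtain ⟨m, hm2, hmnone⟩ := hinf (n+2)
    obtain ⟨m1, hm1, hm1none⟩ := hinf (m+1)
    have hek : ∃ k, r (m + 1 + k) = none :=
      ⟨m1 - (m+1), by rw [show m+1+(m1-(m+1)) = m1 by omega]; exact hm1none⟩
    have hm'' : r (m + 1 + Nat.find hek) = none := Nat.find_spec hek
    have hmin : ∀ j, m < j → j < m + 1 + Nat.find hek → r j ≠ none := by
      intro j hj1 hj2 hc
      have h4 : r (m + 1 + (j - (m+1))) = none := by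
        rw [show m+1+(j-(m+1)) = j by omega]; exact hc
      exact Nat.find_min hek (by omega) h4
    set e := m + Nat.find hek with he
    have hre1 : r (e+1) = none := by
      rw [show e+1 = m+1+Nat.find hek by omega]; exact hm''
    have hαe : α e = none := hα_none e hre1
    have hαm1 : α (m-1) = none := by
      have h4 : r ((m-1)+1) = none := by rw [show m-1+1 = m by omega]; exact hmnone
      exact hα_none _ h4
    set p := Nat.findGreatest (fun p => α p = none) (e-1) with hpdef
    have hm1e : m - 1 ≤ e - 1 := by omega
    have hple : p ≤ e - 1 := Nat.findGreatest_le _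
    have hpge : m - 1 ≤ p := Nat.le_findGreatest hm1e hαm1
    have hαp : α p = none := by
      have h4 := Nat.findGreatest_spec (P := fun x => α x = none) hm1e hαm1
      simpa [hpdef] using h4
    have hfree : ∀ j, p < j → j < e → ∃ σ, α j = some σ := by
      intro j h1 h2
      cases hαj : α j with
      | none => exact absurd hαj (Nat.findGreatest_is_greatest h1 (by omega))
      | some σ => exact ⟨σ, rfl⟩
    have hnp : n < p := by omega
    have hpe : p < e := by omega
    have hinit1 : (r (p+1)).getD A.init = A.init := by
      rcases hF2 p hαp with h | h <;> simp [h]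
    rcases eq_or_lt_of_le (show p + 1 ≤ e by omega) with h1 | h2
    · have hinitacc : A.init ∈ A.acc := by
        have h4 := hacc_prev e hre1
        rw [← h1, hinit1] at h4
        exact h4
      exact ⟨p, e, hnp, hpe, hαp, hαe, [],
        ⟨A.init, by simp [NFAo.evalFrom], hinitacc⟩, by simp [← h1], by simp⟩
    · set w' : List Γ :=
        List.ofFn (fun j : Fin (e - (p+1)) =>
          (hfree (p+1+(j:ℕ)) (by omega) (by omega)).choose) with hw'def
      have hwlen : w'.length = e - (p+1) := by simp [hw'def]
      have hαw : ∀ j (hj : j < w'.length), α (p+1+j) = some w'[j] := by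
        intro j hj
        have hj' : j < e - (p+1) := by rwa [hwlen] at hj
        simp only [hw'def, List.getElem_ofFn]
        exact (hfree (p+1+j) (by omega) (by omega)).choose_spec
      have hlang : w' ∈ A.lang := by
        apply mem_lang_of_run A (w := w') (fun j => (r (p+1+j)).getD A.init) hinit1
        · intro j hj
          exact (hstepq (p+1+j) _ (hαw j hj)).1
        · have hpe2 : p + 1 + w'.length = e := by omega
          have h6 := hacc_prev e hre1
          rw [hpe2]
          exact h6
      exact ⟨p, e, hnp, hpe, hαp, hαe, w', hlang, by omega, hαw⟩
  choose P E hlt hpeP hαP hαE W hWlang hWlen hWget using hext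
  set a : ℕ → ℕ := fun i => Nat.rec 0 (fun _ x => E x) i with hadef
  have haS : ∀ i, a (i+1) = E (a i) := fun i => rfl
  set p : ℕ → ℕ := fun i => P (a i) with hpdef
  set e : ℕ → ℕ := fun i => E (a i) with hedef
  set s : ℕ → ℕ := fun i => if i = 0 then 0 else e (i-1) + 1 with hsdef
  have hs0 : s 0 = 0 := rfl
  have hsS : ∀ i, s (i+1) = e i + 1 := fun i => rfl
  have hsp : ∀ i, s i ≤ p i := by
    intro i
    cases i with
    | zero => simp [hs0, hpdef]
    | succ i =>
      rw [hsS]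
      have h1 : e i < P (E (a i)) := hlt (E (a i))
      simp only [hpdef, haS]
      omega
  have hpeE : ∀ i, e i = p i + 1 + (W (a i)).length := fun i => hWlen (a i)
  set w : ℕ → List (Option Γ) :=
    fun i => List.ofFn (fun j : Fin (p i - s i) => α (s i + j)) with hwdef
  have hwl : ∀ i, (w i).length = p i - s i := by intro i; simp [hwdef]
  refine ⟨w, fun i => W (a i), fun i => hWlang (a i), ?_⟩
  have hul : ∀ i, ((fun i => w i ++ [none] ++ ((fun i => W (a i)) i).map some ++ [none]) i).length
      = (p i - s i) + (W (a i)).length + 2 := by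
    intro i
    rw [show ((fun i => w i ++ [none] ++ ((fun i => W (a i)) i).map some ++ [none]) i)
      = w i ++ [none] ++ (W (a i)).map some ++ [none] from rfl]
    rw [block_length, hwl]
  have hbs : ∀ i, blockStart
      (fun i => w i ++ [none] ++ ((fun i => W (a i)) i).map some ++ [none]) i = s i := by
    intro i
    induction i with
    | zero => simp [blockStart, hs0]
    | succ i ih =>
      rw [blockStart, Finset.sum_range_succ, ← blockStart, ih]
      show s i + (w i ++ [none] ++ (W (a i)).map some ++ [none]).length = s (i+1)
      rw [block_length, hwl]
      have h1 := hsp i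
      have h2 := hpeE i
      rw [hsS]
      omega
  intro i k h
  rw [List.get_eq_getElem, hbs i]
  have hlen2 : k < (p i - s i) + (W (a i)).length + 2 := by rw [← hul i]; exact h
  show α (s i + k) = (w i ++ [none] ++ (W (a i)).map some ++ [none])[k]
  have hsple := hsp i
  have hpee := hpeE i
  by_cases hk1 : k < p i - s i
  · rw [block_get_left _ _ _ _ k (by rw [hwl]; exact hk1)]
    simp only [hwdef, List.getElem_ofFn]
  · by_cases hk2 : k = p i - s i
    · have hk2' : k = (w i).length := by rw [hwl]; exact hk2
      subst hk2'
      rw [block_get_dollar1]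
      rw [show s i + (w i).length = p i from by rw [hwl]; omega]
      exact hαP (a i)
    · by_cases hk3 : k < (p i - s i) + 1 + (W (a i)).length
      · obtain ⟨j, hj, rfl⟩ : ∃ j, j < (W (a i)).length ∧ k = (w i).length + 1 + j :=
          ⟨k - (p i - s i) - 1, by omega, by rw [hwl]; omega⟩
        rw [block_get_mid _ _ _ _ j hj]
        rw [show s i + ((w i).length + 1 + j) = p i + 1 + j from by rw [hwl]; omega]
        exact hWget (a i) j hj
      · have hk4 : k = (w i).length + 1 + (W (a i)).length := by rw [hwl]; omega
        subst hk4
        rw [block_get_dollar2]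
        rw [show s i + ((w i).length + 1 + (W (a i)).length) = e i from by rw [hwl]; omega]
        exact hαE (a i)

lemma mem_lang_sup (A : NFAo Γ Q) (hA : A.Complete) (α : ℕ → Option Γ)
    (w : ℕ → List (Option Γ)) (w' : ℕ → List Γ) (hw' : ∀ i, w' i ∈ A.lang)
    (hcat : OmegaConcatOf (fun i => w i ++ [none] ++ (w' i).map some ++ [none]) α) :
    α ∈ A.dollar.lang := by
  classical
  choose ρ hρ0 hρs hρa using fun i => run_of_mem_lang A (hw' i)
  set u : ℕ → List (Option Γ) := fun i => w i ++ [none] ++ (w' i).map some ++ [none] with hu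
  set s : ℕ → ℕ := blockStart u with hs
  have hul : ∀ i, (u i).length = (w i).length + (w' i).length + 2 := by
    intro i
    rw [hu]
    exact block_length _ _ _ _
  have hs0 : s 0 = 0 := by simp [hs, blockStart]
  have hsS : ∀ i, s (i+1) = s i + (u i).length := by
    intro i
    rw [hs, blockStart, Finset.sum_range_succ]
    rfl
  have hsmono : ∀ i j, i ≤ j → s i ≤ s j := by
    intro i j hij
    rw [hs, blockStart, blockStart]
    exact Finset.sum_le_sum_of_subset (Finset.range_subset_range.2 hij)
  have hsge : ∀ i, i ≤ s i := by
    intro i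
    induction i with
    | zero => omega
    | succ i ih =>
      have h1 := hsS i
      have h2 := hul i
      omega
  set idx : ℕ → ℕ := fun n => Nat.findGreatest (fun i => s i ≤ n) (n+1) with hidx
  have hidx1 : ∀ n, s (idx n) ≤ n := by
    intro n
    have h4 := Nat.findGreatest_spec (P := fun i => s i ≤ n) (m := 0) (n := n+1) (by omega) (by omega)
    simpa [hidx] using h4
  have hidx2 : ∀ n, n < s (idx n + 1) := by
    intro n
    by_contra hc
    push_neg at hc
    have hb : idx n + 1 ≤ n + 1 := by
      have h5 := hsge (idx n + 1)
      omega
    exact Nat.findGreatest_is_greatest (Nat.lt_succ_self _) hb hc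
  have hidx_eq : ∀ n i, s i ≤ n → n < s (i+1) → idx n = i := by
    intro n i h1 h2
    rcases lt_trichotomy (idx n) i with h | h | h
    · have h3 : s (idx n + 1) ≤ s i := hsmono _ _ (by omega)
      have h4 := hidx2 n
      omega
    · exact h
    · have h3 : s (i+1) ≤ s (idx n) := hsmono _ _ (by omega)
      have h4 := hidx1 n
      omega
  set dfn : Option Q → Option Γ → Option Q := fun x σ => match σ with
    | some σ => some (hA (x.getD A.init) σ).choose
    | none => if x.getD A.init ∈ A.acc then none else some A.init with hdfn
  have hdfn_mem : ∀ x σ, dfn x σ ∈ A.dollarStep x σ := by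
    intro x σ
    cases σ with
    | some σ =>
      rw [dollarStep_some]
      exact ⟨_, (hA _ σ).choose_spec, rfl⟩
    | none =>
      rw [dollarStep_none]
      by_cases hx : x.getD A.init ∈ A.acc <;> simp [hdfn, hx]
  have hdfn_none : ∀ x, dfn x none = none ∨ dfn x none = some A.init := by
    intro x
    by_cases hx : x.getD A.init ∈ A.acc
    · left; simp [hdfn, hx]
    · right; simp [hdfn, hx]
  have hstep_il : ∀ (x : Option Q), (x = none ∨ x = some A.init) →
      ∀ τ, A.dollarStep x τ = A.dollarStep (some A.init) τ := by
    rintro x (rfl | rfl) τ <;> rfl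
  set roam : ℕ → ℕ → Option Q := fun i k =>
    Nat.rec (if i = 0 then some A.init else none) (fun j x => dfn x (α (s i + j))) k with hroam
  have hroam0 : ∀ i, roam i 0 = if i = 0 then some A.init else none := fun i => rfl
  have hroamS : ∀ i k, roam i (k+1) = dfn (roam i k) (α (s i + k)) := fun i k => rfl
  set r : ℕ → Option Q := fun n =>
    if n - s (idx n) ≤ (w (idx n)).length + 1 then roam (idx n) (n - s (idx n))
    else some (ρ (idx n) (n - s (idx n) - (w (idx n)).length - 1)) with hrdef
  have hrep : ∀ i k, k < (u i).length →
      r (s i + k) = if k ≤ (w i).length + 1 then roam i k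
        else some (ρ i (k - (w i).length - 1)) := by
    intro i k hk
    have h1 : idx (s i + k) = i := hidx_eq _ i (by omega) (by rw [hsS]; omega)
    simp only [hrdef, h1, Nat.add_sub_cancel_left]
  have hα' : ∀ i k (h : k < (u i).length), α (s i + k) = (u i)[k]'h := by
    intro i k h
    have h5 := hcat i k h
    rw [List.get_eq_getElem] at h5
    rw [← hs] at h5
    exact h5
  have hαd1 : ∀ i, α (s i + (w i).length) = none := by
    intro i
    rw [hα' i _ (by rw [hul]; omega)]
    exact block_get_dollar1 (w i) (w' i) some none (by rw [block_length]; omega)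
  have hαmid : ∀ i j, ∀ h : j < (w' i).length,
      α (s i + ((w i).length + 1 + j)) = some ((w' i)[j]) := by
    intro i j h
    rw [hα' i _ (by rw [hul]; omega)]
    exact block_get_mid (w i) (w' i) some none j h (by rw [block_length]; omega)
  have hαd2 : ∀ i, α (s i + ((w i).length + 1 + (w' i).length)) = none := by
    intro i
    rw [hα' i _ (by rw [hul]; omega)]
    exact block_get_dollar2 (w i) (w' i) some none (by rw [block_length]; omega)
  refine ⟨r, ⟨?_, ?_⟩, none, rfl, ?_⟩
  · have h1 := hrep 0 0 (by rw [hul]; omega)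
    rw [hs0] at h1
    simp only [Nat.add_zero] at h1
    rw [h1, if_pos (by omega), hroam0]
    rfl
  · intro n
    have hk1 := hidx1 n
    have hk2 := hidx2 n
    obtain ⟨k, hn⟩ : ∃ k, n = s (idx n) + k := ⟨n - s (idx n), by omega⟩
    set i := idx n with hidef
    have hklen : k < (u i).length := by
      have h3 := hsS i
      omega
    have hrn := hrep i k hklen
    rw [← hn] at hrn
    show r (n+1) ∈ A.dollarStep (r n) (α n)
    by_cases hcA : k + 1 < (u i).length
    · have hrn1 := hrep i (k+1) hcA
      rw [show s i + (k+1) = n + 1 by omega] at hrn1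
      by_cases hc1 : k ≤ (w i).length
      · rw [hrn1, if_pos (by omega), hroamS, hrn, if_pos (by omega)]
        rw [show s i + k = n by omega]
        exact hdfn_mem _ _
      · by_cases hc2 : k = (w i).length + 1
        · have hwpos : 0 < (w' i).length := by
            rw [hul] at hcA
            omega
          have hrval : r n = dfn (roam i (w i).length) (α (s i + (w i).length)) := by
            rw [hrn, if_pos (by omega), hc2, hroamS]
          have hrnil : r n = none ∨ r n = some A.init := by
            rw [hrval, hαd1 i]
            exact hdfn_none _
          have hαn' : α n = some ((w' i)[0]) := by
            rw [hn, show s i + k = s i + ((w i).length + 1 + 0) by omega]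
            exact hαmid i 0 hwpos
          rw [hrn1, if_neg (by omega), hαn', hstep_il _ hrnil, dollarStep_some]
          refine ⟨ρ i 1, ?_, by rw [show k + 1 - (w i).length - 1 = 1 by omega]⟩
          have h6 := hρs i 0 hwpos
          rw [hρ0 i] at h6
          simpa using h6
        · obtain ⟨j, rfl⟩ : ∃ j, k = (w i).length + 1 + (j + 1) :=
            ⟨k - (w i).length - 2, by omega⟩
          have hjlt : j + 1 < (w' i).length := by
            rw [hul] at hcA
            omega
          have hαn' : α n = some ((w' i)[j+1]) := by
            rw [hn]
            exact hαmid i (j+1) hjlt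
          rw [hrn1, if_neg (by omega), hrn, if_neg (by omega), hαn', dollarStep_some]
          refine ⟨ρ i (j+2), ?_, ?_⟩
          · have h6 := hρs i (j+1) hjlt
            simpa [show (w i).length + 1 + (j+1) - (w i).length - 1 = j + 1 by omega] using h6
          · simp [show (w i).length + 1 + (j+1) + 1 - (w i).length - 1 = j + 2 by omega]
    · have hkeq : k = (w i).length + 1 + (w' i).length := by
        rw [hul] at hklen hcA
        omega
      have hαn' : α n = none := by
        rw [hn, hkeq]
        exact hαd2 i
      have hrn1 : r (n+1) = none := by
        have h7 := hrep (i+1) 0 (by rw [hul]; omega)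
        rw [show s (i+1) + 0 = n + 1 by have := hul i; rw [hsS]; omega] at h7
        rw [h7, if_pos (by omega), hroam0, if_neg (by omega)]
      rw [hrn1, hαn']
      by_cases hw0 : (w' i).length = 0
      · have hrnil : r n = none ∨ r n = some A.init := by
          rw [hrn, if_pos (by omega), hkeq, hw0]
          have : (w i).length + 1 + 0 = (w i).length + 1 := by omega
          rw [this, hroamS, hαd1 i]
          exact hdfn_none _
        have hiacc : A.init ∈ A.acc := by
          have h8 := hρa i
          rw [hw0, hρ0 i] at h8
          exact h8
        rw [hstep_il _ hrnil, dollarStep_none]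
        simp [hiacc]
      · have hrval : r n = some (ρ i (w' i).length) := by
          rw [hrn, if_neg (by omega)]
          rw [show k - (w i).length - 1 = (w' i).length from by omega]
        rw [hrval, dollarStep_none]
        have h8 := hρa i
        simp [h8]
  · intro n
    refine ⟨s (n+1), by have := hsge (n+1); omega, ?_⟩
    have h7 := hrep (n+1) 0 (by rw [hul]; omega)
    rw [Nat.add_zero] at h7
    rw [h7, if_pos (by omega), hroam0, if_neg (by omega)]

end DollarAux

/-- For every complete NFA `A` over a finite alphabet `Σ`, the ω-language
of the Büchi automaton `A_f` consists exactly of the infinite concatenations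
`w₁ $ w₁' $ w₂ $ w₂' $ ⋯` with `wᵢ ∈ Σ_$^*` and `wᵢ' ∈ L(A)`. -/
theorem dollar_lang {Γ Q : Type} [Fintype Γ] [Fintype Q]
    (A : NFAo Γ Q) (hA : A.Complete) :
    A.dollar.lang =
      {α : ℕ → Option Γ |
        ∃ (w : ℕ → List (Option Γ)) (w' : ℕ → List Γ),
          (∀ i, w' i ∈ A.lang) ∧
          OmegaConcatOf (fun i => w i ++ [none] ++ (w' i).map some ++ [none]) α} := by
  ext α
  constructor
  · exact fun h => DollarAux.mem_lang_sub A α h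
  · rintro ⟨w, w', hw', hcat⟩
    exact DollarAux.mem_lang_sup A hA α w w' hw' hcat
end

section
/- Given two complete NFAs A and B over the same finite alphabet Σ, L(B) ⊆ L(A) if, and only if, L(B_f) ⊆ L(A_f). -/
open scoped Classical ENNReal

section DollarProof

variable {Γ Q : Type*}

lemma reduceOption_map_some' (l : List Γ) : (l.map some).reduceOption = l := by
  induction l with
  | nil => rfl
  | cons a t ih => simpa using ih

lemma mem_dollarStep_some (M : NFAo Γ Q) (s s' : Option Q) (σ : Γ) :
    s' ∈ M.dollarStep s (some σ) ↔ ∃ q' ∈ M.step (s.getD M.init) σ, s' = some q' := by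
  cases s <;> simp [NFAo.dollarStep, NFAo.dollarStepAux, eq_comm]

lemma mem_dollarStep_none (M : NFAo Γ Q) (s s' : Option Q) :
    s' ∈ M.dollarStep s none ↔
      (s.getD M.init ∈ M.acc ∧ s' = none) ∨ (s.getD M.init ∉ M.acc ∧ s' = some M.init) := by
  cases s <;> simp only [NFAo.dollarStep, NFAo.dollarStepAux, Option.getD_some, Option.getD_none] <;>
    split <;> simp_all

lemma dollar_complete (M : NFAo Γ Q) (hM : M.Complete) (s : Option Q) (σ : Option Γ) :
    (M.dollarStep s σ).Nonempty := by
  have h : ∀ q, (M.dollarStepAux q σ).Nonempty := by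
    intro q
    cases σ with
    | some σ => exact (hM q σ).image some
    | none =>
      by_cases h : q ∈ M.acc <;> simp [NFAo.dollarStepAux, h]
  cases s <;> exact h _

lemma mem_evalFrom_iff' (M : NFAo Γ Q) (S : Set Q) (w : List Γ) (x : Q) :
    x ∈ M.evalFrom S w ↔
      ∃ q : ℕ → Q, q 0 ∈ S ∧ (∀ i (h : i < w.length), q (i+1) ∈ M.step (q i) (w[i]'h)) ∧
        q w.length = x := by
  induction w generalizing S with
  | nil =>
    simp only [NFAo.evalFrom, List.foldl_nil, List.length_nil]
    constructor
    · intro hx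
      exact ⟨fun _ => x, hx, fun i h => absurd h (by omega), rfl⟩
    · rintro ⟨q, h0, _, hend⟩
      rwa [hend] at h0
  | cons a t ih =>
    have : M.evalFrom S (a :: t) = M.evalFrom (⋃ q ∈ S, M.step q a) t := rfl
    rw [this, ih]
    constructor
    · rintro ⟨q, h0, hstep, hend⟩
      simp only [Set.mem_iUnion] at h0
      obtain ⟨s, hs, hq0⟩ := h0
      refine ⟨fun n => Nat.rec s (fun n _ => q n) n, hs, ?_, hend⟩
      intro i h
      cases i with
      | zero => exact hq0
      | succ i => exact hstep i (by simpa using h)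
    · rintro ⟨q, h0, hstep, hend⟩
      refine ⟨fun n => q (n+1), ?_, ?_, hend⟩
      · simp only [Set.mem_iUnion]
        exact ⟨q 0, h0, hstep 0 (by simp)⟩
      · intro i h
        exact hstep (i+1) (by simpa using h)

lemma mem_lang_iff' (M : NFAo Γ Q) (w : List Γ) :
    w ∈ M.lang ↔ ∃ q : ℕ → Q, q 0 = M.init ∧
      (∀ i (h : i < w.length), q (i+1) ∈ M.step (q i) (w[i]'h)) ∧
      q w.length ∈ M.acc := by
  constructor
  · rintro ⟨x, hx, hacc⟩
    rw [mem_evalFrom_iff'] at hx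
    obtain ⟨q, h0, hstep, hend⟩ := hx
    exact ⟨q, by simpa using h0, hstep, by rwa [hend]⟩
  · rintro ⟨q, h0, hstep, hacc⟩
    exact ⟨q w.length, (mem_evalFrom_iff' M _ w _).2 ⟨q, by simp [h0], hstep, rfl⟩, hacc⟩

/-- A segment of `α` starting at a reset point `p` and ending at a `$`-position `m`,
with no `$` strictly inside. -/
def GoodSeg (α : ℕ → Option Γ) (p m : ℕ) : Prop :=
  (p = 0 ∨ ∃ k, p = k + 1 ∧ α k = none) ∧ p ≤ m ∧
    (∀ k, p ≤ k → k < m → α k ≠ none) ∧ α m = none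

/-- The finite word read between positions `p` and `m`. -/
def segWord (α : ℕ → Option Γ) (p m : ℕ) : List Γ :=
  (List.ofFn fun i : Fin (m - p) => α (p + i)).reduceOption

lemma segWord_eq {α : ℕ → Option Γ} {p m : ℕ} (w : List Γ) (hlen : m - p = w.length)
    (hval : ∀ i (h : i < w.length), α (p + i) = some (w[i]'h)) :
    segWord α p m = w := by
  unfold segWord
  have : (List.ofFn fun i : Fin (m - p) => α (p + i)) = w.map some := by
    apply List.ext_getElem
    · simp [hlen]
    · intro i h1 h2
      simp only [List.getElem_ofFn, List.getElem_map]
      exact hval i (by simpa using h2)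
  rw [this, reduceOption_map_some']

lemma segWord_eq_ofFn {α : ℕ → Option Γ} {p m : ℕ}
    (hfree : ∀ k, p ≤ k → k < m → α k ≠ none) :
    ∃ f : Fin (m - p) → Γ, segWord α p m = List.ofFn f ∧
      ∀ i : Fin (m - p), α (p + ↑i) = some (f i) := by
  have h : ∀ i : Fin (m - p), ∃ σ, α (p + ↑i) = some σ := by
    intro i
    rcases hα : α (p + ↑i) with _ | σ
    · exact absurd hα (hfree _ (by omega) (by omega))
    · exact ⟨σ, hα⟩
  choose f hf using h
  refine ⟨f, segWord_eq _ (by simp) ?_, hf⟩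
  intro i h
  simpa using hf ⟨i, by simpa using h⟩

lemma dollar_lang_to_segs (M : NFAo Γ Q) {α : ℕ → Option Γ} (hα : α ∈ M.dollar.lang) :
    ∀ n, ∃ p m, n ≤ m ∧ GoodSeg α p m ∧ segWord α p m ∈ M.lang := by
  classical
  obtain ⟨r, ⟨hr0, hstep⟩, qa, hqa, hinf⟩ := hα
  have hqnone : qa = none := hqa
  subst hqnone
  intro n
  obtain ⟨m', hm', hrm'⟩ := hinf (n + 1)
  obtain ⟨m, rfl⟩ : ∃ m, m' = m + 1 := ⟨m' - 1, by omega⟩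
  have hst := hstep m
  rw [hrm'] at hst
  have hαm : α m = none := by
    rcases hh : α m with _ | σ
    · rfl
    · rw [hh] at hst
      rcases (mem_dollarStep_some M _ _ _).1 hst with ⟨q', _, h⟩
      exact absurd h (by simp)
  rw [hαm] at hst
  have hacc : (r m).getD M.init ∈ M.acc := by
    rcases (mem_dollarStep_none M _ _).1 hst with ⟨h, _⟩ | ⟨_, h⟩
    · exact h
    · exact absurd h (by simp)
  have main : ∀ p, (p = 0 ∨ ∃ k, p = k + 1 ∧ α k = none) → p ≤ m →
      (∀ k, p ≤ k → k < m → α k ≠ none) → segWord α p m ∈ M.lang := by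
    intro p hreset hple hfree
    obtain ⟨f, hseg, hf⟩ := segWord_eq_ofFn hfree
    have hlen : (segWord α p m).length = m - p := by simp [hseg]
    have hrp : (r p).getD M.init = M.init := by
      rcases hreset with rfl | ⟨k, rfl, hk⟩
      · rw [hr0]; rfl
      · have hs := hstep k
        rw [hk] at hs
        rcases (mem_dollarStep_none M _ _).1 hs with ⟨_, h⟩ | ⟨_, h⟩ <;> simp [h]
    rw [mem_lang_iff']
    refine ⟨fun i => (r (p + i)).getD M.init, by simpa using hrp, ?_, ?_⟩
    · intro i h
      have hi : i < m - p := hlen ▸ h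
      have hαi : α (p + i) = some (f ⟨i, hi⟩) := by simpa using hf ⟨i, hi⟩
      have hs := hstep (p + i)
      rw [hαi] at hs
      rcases (mem_dollarStep_some M _ _ _).1 hs with ⟨q', hq', he⟩
      have hgi : (segWord α p m)[i]'h = f ⟨i, hi⟩ := by
        have : (segWord α p m)[i]'h = (List.ofFn f)[i]'(by simpa [hseg] using h) := by
          simp_rw [hseg]
        rw [this, List.getElem_ofFn]
      rw [hgi]
      have h1 : p + i + 1 = p + (i + 1) := by omega
      rw [h1] at he
      simpa [he] using hq'
    · rw [hlen]
      show (r (p + (m - p))).getD M.init ∈ M.acc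
      have h2 : p + (m - p) = m := by omega
      rw [h2]
      exact hacc
  by_cases hex : ∃ k, k < m ∧ α k = none
  · set P : ℕ → Prop := fun k => k < m ∧ α k = none with hP
    set j := Nat.findGreatest P m with hj
    obtain ⟨k0, hk0⟩ := hex
    have hPj : P j := Nat.findGreatest_spec (m := k0) (by omega) hk0
    have hfree : ∀ k, j + 1 ≤ k → k < m → α k ≠ none := by
      intro k h1 h2 hk
      exact (Nat.findGreatest_is_greatest (P := P) (n := m) (by omega) (by omega)) ⟨h2, hk⟩
    exact ⟨j + 1, m, by omega, ⟨Or.inr ⟨j, rfl, hPj.2⟩, by omega, hfree, hαm⟩,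
      main _ (Or.inr ⟨j, rfl, hPj.2⟩) (by omega) hfree⟩
  · push_neg at hex
    have hfree : ∀ k, 0 ≤ k → k < m → α k ≠ none := fun k _ h2 => hex k h2
    exact ⟨0, m, by omega, ⟨Or.inl rfl, by omega, hfree, hαm⟩,
      main 0 (Or.inl rfl) (by omega) hfree⟩

open Classical in
/-- Build an accepting run of `M.dollar` on `α`, following the given finite runs `qs i`
on the segments `[p i, m i)` and arbitrary transitions elsewhere. -/
noncomputable def buildRun (M : NFAo Γ Q) (hM : M.Complete) (α : ℕ → Option Γ)
    (p m : ℕ → ℕ) (qs : ℕ → ℕ → Q) : ℕ → Option Q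
  | 0 => some M.init
  | k + 1 =>
    if h1 : ∃ i, p i ≤ k ∧ k < m i then
      some (qs h1.choose (k + 1 - p h1.choose))
    else if ∃ i, k = m i then none
    else (dollar_complete M hM (buildRun M hM α p m qs k) (α k)).choose

open Classical in
lemma buildRun_succ (M : NFAo Γ Q) (hM : M.Complete) (α : ℕ → Option Γ)
    (p m : ℕ → ℕ) (qs : ℕ → ℕ → Q) (k : ℕ) :
    buildRun M hM α p m qs (k + 1) =
      if h1 : ∃ i, p i ≤ k ∧ k < m i then
        some (qs h1.choose (k + 1 - p h1.choose))
      else if ∃ i, k = m i then none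
      else (dollar_complete M hM (buildRun M hM α p m qs k) (α k)).choose := by
  rfl

lemma dollar_segs_to_lang (M : NFAo Γ Q) (hM : M.Complete) {α : ℕ → Option Γ}
    (h : ∀ n, ∃ p m, n ≤ m ∧ GoodSeg α p m ∧ segWord α p m ∈ M.lang) :
    α ∈ M.dollar.lang := by
  classical
  have h' : ∀ n, ∃ c : ℕ × ℕ, n ≤ c.2 ∧ GoodSeg α c.1 c.2 ∧ segWord α c.1 c.2 ∈ M.lang := by
    intro n; obtain ⟨p, m, h1, h2, h3⟩ := h n; exact ⟨(p, m), h1, h2, h3⟩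
  choose g hg using h'
  set c : ℕ → ℕ × ℕ := fun i => Nat.rec (g 0) (fun _ prev => g (prev.2 + 1)) i with hc
  set p : ℕ → ℕ := fun i => (c i).1 with hpdef
  set m : ℕ → ℕ := fun i => (c i).2 with hmdef
  have hcs : ∀ i, c (i + 1) = g ((c i).2 + 1) := fun i => rfl
  have hgood : ∀ i, GoodSeg α (p i) (m i) := by
    intro i
    cases i with
    | zero => exact (hg 0).2.1
    | succ i => exact (hg ((c i).2 + 1)).2.1
  have hw : ∀ i, segWord α (p i) (m i) ∈ M.lang := by
    intro i
    cases i with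
    | zero => exact (hg 0).2.2
    | succ i => exact (hg ((c i).2 + 1)).2.2
  have hple : ∀ i, p i ≤ m i := fun i => (hgood i).2.1
  have hm_lt : ∀ i, m i < m (i + 1) := by
    intro i
    have := (hg ((c i).2 + 1)).1
    simpa [hmdef, hcs i] using this
  have hmp : ∀ i, m i < p (i + 1) := by
    intro i
    by_contra hcon
    push_neg at hcon
    exact (hgood (i + 1)).2.2.1 (m i) hcon (hm_lt i) (hgood i).2.2.2
  have mlt : ∀ i j, i < j → m i < p j := by
    intro i j hij
    induction j with
    | zero => omega
    | succ j ih =>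
      rcases Nat.lt_succ_iff_lt_or_eq.1 hij with hlt | heq
      · exact lt_of_lt_of_le (ih hlt) (le_trans (hple j) (le_of_lt (hmp j)))
      · subst heq; exact hmp i
  have uniq : ∀ k i i', p i ≤ k → k < m i → p i' ≤ k → k < m i' → i = i' := by
    intro k i i' h1 h2 h3 h4
    by_contra hne
    rcases Nat.lt_or_ge i i' with hlt | hge
    · have := mlt i i' hlt; omega
    · have : i' < i := by omega
      have := mlt i' i this; omega
  -- finite runs on segments
  have hsegs : ∀ i, ∃ f : Fin (m i - p i) → Γ,
      segWord α (p i) (m i) = List.ofFn f ∧ ∀ jj : Fin (m i - p i), α (p i + ↑jj) = some (f jj) :=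
    fun i => segWord_eq_ofFn (hgood i).2.2.1
  choose f hfseg hfval using hsegs
  have hrun : ∀ i, ∃ q : ℕ → Q, q 0 = M.init ∧
      (∀ j (hj : j < (segWord α (p i) (m i)).length),
        q (j + 1) ∈ M.step (q j) ((segWord α (p i) (m i))[j]'hj)) ∧
      q (segWord α (p i) (m i)).length ∈ M.acc :=
    fun i => (mem_lang_iff' M _).1 (hw i)
  choose qs hqs0 hqss hqsa using hrun
  have hlen : ∀ i, (segWord α (p i) (m i)).length = m i - p i := by
    intro i; simp [hfseg i]
  have hstep' : ∀ i j (hj : j < m i - p i), qs i (j + 1) ∈ M.step (qs i j) (f i ⟨j, hj⟩) := by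
    intro i j hj
    have hj' : j < (segWord α (p i) (m i)).length := by rw [hlen i]; exact hj
    have := hqss i j hj'
    have hgj : (segWord α (p i) (m i))[j]'hj' = f i ⟨j, hj⟩ := by
      have : (segWord α (p i) (m i))[j]'hj' = (List.ofFn (f i))[j]'(by simp [← hfseg i, hlen i]; exact hj) := by
        simp_rw [hfseg i]
      rw [this, List.getElem_ofFn]
    rwa [hgj] at this
  have hacc' : ∀ i, qs i (m i - p i) ∈ M.acc := by
    intro i
    have := hqsa i
    rwa [hlen i] at this
  have hval' : ∀ i j (hj : j < m i - p i), α (p i + j) = some (f i ⟨j, hj⟩) := by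
    intro i j hj
    simpa using hfval i ⟨j, hj⟩
  set r : ℕ → Option Q := buildRun M hM α p m qs with hr
  have hrsucc : ∀ k, r (k + 1) =
      if h1 : ∃ i, p i ≤ k ∧ k < m i then some (qs h1.choose (k + 1 - p h1.choose))
      else if ∃ i, k = m i then none
      else (dollar_complete M hM (r k) (α k)).choose :=
    fun k => buildRun_succ M hM α p m qs k
  have hr0 : r 0 = some M.init := rfl
  -- after a $-letter the run is at `none` or `some init`
  have hreset : ∀ k, α k = none → r (k + 1) = none ∨ r (k + 1) = some M.init := by
    intro k hk
    rw [hrsucc k]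
    split_ifs with h1 h2
    · obtain ⟨i', h1a, h1b⟩ := h1
      exact absurd hk ((hgood i').2.2.1 k h1a h1b)
    · left; rfl
    · have hmem := (dollar_complete M hM (r k) (α k)).choose_spec
      set s' := (dollar_complete M hM (r k) (α k)).choose with hs'
      rw [hk] at hmem
      rcases (mem_dollarStep_none M _ _).1 hmem with ⟨_, hh⟩ | ⟨_, hh⟩
      · left; exact hh
      · right; exact hh
  have hrp : ∀ i, r (p i) = none ∨ r (p i) = some M.init := by
    intro i
    rcases (hgood i).1 with hz | ⟨k, hk, hαk⟩
    · rw [hz]; right; rfl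
    · rw [hk]; exact hreset k hαk
  have hrpD : ∀ i, (r (p i)).getD M.init = M.init := by
    intro i; rcases hrp i with hh | hh <;> simp [hh]
  have hA : ∀ i j, 1 ≤ j → j ≤ m i - p i → r (p i + j) = some (qs i j) := by
    intro i j h1 h2
    obtain ⟨j', rfl⟩ : ∃ j', j = j' + 1 := ⟨j - 1, by omega⟩
    have hk : p i + (j' + 1) = (p i + j') + 1 := by omega
    rw [hk, hrsucc]
    have hex : ∃ i', p i' ≤ p i + j' ∧ p i + j' < m i' := ⟨i, by omega, by omega⟩
    rw [dif_pos hex]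
    obtain ⟨ha, hb⟩ := hex.choose_spec
    have hchoose : hex.choose = i := uniq _ _ _ ha hb (by omega) (by omega)
    rw [hchoose]
    have harr : p i + j' + 1 - p i = j' + 1 := by omega
    rw [harr]
  have hrunstep : ∀ k, r (k + 1) ∈ M.dollarStep (r k) (α k) := by
    intro k
    rw [hrsucc k]
    split_ifs with h1 h2
    · obtain ⟨ha, hb⟩ := h1.choose_spec
      set i := h1.choose with hi
      set j := k - p i with hjdef
      have hj : j < m i - p i := by omega
      have hαk : α k = some (f i ⟨j, hj⟩) := by
        have := hval' i j hj
        rwa [show p i + j = k by omega] at this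
      rw [hαk]
      have harr : k + 1 - p i = j + 1 := by omega
      rw [harr]
      rcases Nat.eq_zero_or_pos j with hj0 | hjpos
      · -- k = p i
        have hkp : k = p i := by omega
        apply (mem_dollarStep_some M _ _ _).2
        refine ⟨qs i (j + 1), ?_, rfl⟩
        have h00 := hstep' i j hj
        have hq : qs i j = M.init := by rw [hj0, hqs0 i]
        rw [hq] at h00
        rw [hkp, hrpD i]
        exact h00
      · have hrk : r k = some (qs i j) := by
          have := hA i j hjpos (by omega)
          rwa [show p i + j = k by omega] at this
        rw [hrk]
        apply (mem_dollarStep_some M _ _ _).2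
        refine ⟨qs i (j + 1), ?_, rfl⟩
        simpa using hstep' i j hj
    · obtain ⟨i, hi⟩ := h2
      subst hi
      rw [(hgood i).2.2.2]
      apply (mem_dollarStep_none M _ _).2
      left
      refine ⟨?_, rfl⟩
      rcases Nat.eq_zero_or_pos (m i - p i) with hz | hpos
      · have hpm : p i = m i := by have := hple i; omega
        have : (r (m i)).getD M.init = M.init := by rw [← hpm]; exact hrpD i
        rw [this]
        have := hacc' i
        rwa [hz, hqs0 i] at this
      · have hrk : r (m i) = some (qs i (m i - p i)) := by
          have := hA i (m i - p i) (by omega) (le_refl _)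
          rwa [show p i + (m i - p i) = m i by have := hple i; omega] at this
        rw [hrk]
        exact hacc' i
    · exact (dollar_complete M hM (r k) (α k)).choose_spec
  have hnone : ∀ i, r (m i + 1) = none := by
    intro i
    rw [hrsucc (m i)]
    have hn1 : ¬ ∃ i', p i' ≤ m i ∧ m i < m i' := by
      rintro ⟨i', ha, hb⟩
      rcases Nat.lt_or_ge i i' with hlt | hge
      · have := mlt i i' hlt; omega
      · have hmono : StrictMono m := strictMono_nat_of_lt_succ hm_lt
        have : m i' ≤ m i := hmono.le_iff_le.2 hge
        omega
    rw [dif_neg hn1, if_pos ⟨i, rfl⟩]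
  have hmge : ∀ i, i ≤ m i := by
    intro i
    induction i with
    | zero => omega
    | succ i ih => have := hm_lt i; omega
  refine ⟨r, ⟨hr0, hrunstep⟩, none, rfl, ?_⟩
  intro n
  exact ⟨m n + 1, by have := hmge n; omega, hnone n⟩

lemma getElem_idx_congr {w : List Γ} {a b : ℕ} (hab : a = b) (ha : a < w.length) :
    w[a]'ha = w[b]'(hab ▸ ha) := by subst hab; rfl

end DollarProof

/-- For complete NFAs `A`, `B` over the same finite alphabet,
`L(B) ⊆ L(A)` iff `L(B_f) ⊆ L(A_f)`. -/
theorem dollar_lang_subset_iff {Γ Q₁ Q₂ : Type} [Fintype Γ] [Fintype Q₁] [Fintype Q₂]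
    (A : NFAo Γ Q₁) (B : NFAo Γ Q₂) (hA : A.Complete) (hB : B.Complete) :
    B.lang ⊆ A.lang ↔ B.dollar.lang ⊆ A.dollar.lang := by
  
  constructor
  · intro hsub α hα
    apply dollar_segs_to_lang A hA
    intro n
    obtain ⟨p, m, h1, h2, h3⟩ := dollar_lang_to_segs B hα n
    exact ⟨p, m, h1, h2, hsub h3⟩
  · intro hsub w hw
    classical
    set L := w.length with hL
    set α : ℕ → Option Γ := fun n => if h : n % (L + 1) = L then none
      else some (w[n % (L + 1)]'(by
        have := Nat.mod_lt n (show 0 < L + 1 by omega); omega)) with hα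
    have hmod : ∀ n, α n = none ↔ n % (L + 1) = L := by
      intro n
      constructor
      · intro hnn
        by_contra hne
        rw [hα] at hnn
        simp only at hnn
        rw [dif_neg hne] at hnn
        exact absurd hnn (by simp)
      · intro hnn; simp [hα, hnn]
    have hmodL : ∀ a : ℕ, ((L + 1) * a + L) % (L + 1) = L := by
      intro a
      rw [Nat.mul_add_mod]
      exact Nat.mod_eq_of_lt (by omega)
    have hvals : ∀ (e i : ℕ) (hi : i < L), α ((L + 1) * e + i) = some (w[i]'hi) := by
      intro e i hi
      have hmm : ((L + 1) * e + i) % (L + 1) = i := by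
        rw [Nat.mul_add_mod]
        exact Nat.mod_eq_of_lt (by omega)
      rw [hα]
      simp only
      rw [dif_neg (by omega)]
      exact congrArg some (getElem_idx_congr hmm _)
    have hgoodper : ∀ n, GoodSeg α ((L + 1) * n) ((L + 1) * n + L) ∧
        segWord α ((L + 1) * n) ((L + 1) * n + L) = w := by
      intro n
      constructor
      · refine ⟨?_, by omega, ?_, (hmod _).2 (hmodL n)⟩
        · cases n with
          | zero => left; simp
          | succ n =>
            right
            refine ⟨(L + 1) * (n + 1) - 1, by have : (L+1) * (n+1) = (L+1)*n + (L+1) := by ring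
                                              omega, (hmod _).2 ?_⟩
            have he : (L + 1) * (n + 1) - 1 = (L + 1) * n + L := by
              have : (L + 1) * (n + 1) = (L + 1) * n + (L + 1) := by ring
              omega
            rw [he]
            exact hmodL n
        · intro k hk1 hk2 hkn
          rw [hmod] at hkn
          have hkk : k % (L + 1) = k - (L + 1) * n := by
            conv_lhs => rw [show k = (L + 1) * n + (k - (L + 1) * n) by omega]
            rw [Nat.mul_add_mod]
            exact Nat.mod_eq_of_lt (by omega)
          omega
      · apply segWord_eq
        · omega
        · intro i hi
          exact hvals n i hi
    have hBα : α ∈ B.dollar.lang := by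
      apply dollar_segs_to_lang B hB
      intro n
      refine ⟨(L + 1) * n, (L + 1) * n + L, ?_, (hgoodper n).1, by rw [(hgoodper n).2]; exact hw⟩
      have : n ≤ (L + 1) * n := Nat.le_mul_of_pos_left n (by omega)
      omega
    obtain ⟨p, m, _, ⟨hres, hpm, hfree, hmnone⟩, hseg⟩ := dollar_lang_to_segs A (hsub hBα) 0
    have hpmod : p % (L + 1) = 0 := by
      rcases hres with rfl | ⟨k, rfl, hk⟩
      · simp
      · rw [hmod] at hk
        have hdm := Nat.div_add_mod k (L + 1)
        have h2 : k + 1 = (L + 1) * (k / (L + 1) + 1) := by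
          rw [Nat.mul_add, Nat.mul_one]; omega
        rw [h2]
        exact Nat.mul_mod_right _ _
    obtain ⟨e, rfl⟩ : ∃ e, p = (L + 1) * e :=
      ⟨p / (L + 1), by have := Nat.div_add_mod p (L + 1); omega⟩
    have hmmod : m % (L + 1) = L := (hmod m).1 hmnone
    have hple2 : m ≤ (L + 1) * e + L := by
      by_contra hcon
      push_neg at hcon
      exact hfree ((L + 1) * e + L) (by omega) (by omega) ((hmod _).2 (hmodL e))
    have hs : m % (L + 1) = m - (L + 1) * e := by
      conv_lhs => rw [show m = (L + 1) * e + (m - (L + 1) * e) by omega]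
      rw [Nat.mul_add_mod]
      exact Nat.mod_eq_of_lt (by omega)
    have hmeq : m = (L + 1) * e + L := by omega
    have hwseg : segWord α ((L + 1) * e) m = w := by
      apply segWord_eq
      · omega
      · intro i hi
        exact hvals e i hi
    rw [hwseg] at hseg
    exact hseg
end

section
/- For every complete NFA A over Σ, the ω-language of the Büchi automaton fork(A_f) is L(fork(A_f)) = { σ σ' w : σ, σ' ∈ Σ_$, w ∈ L(A_f) } ∪ { σ $ w : σ ∈ Σ_$, w ∈ L(B_f) }. -/
open scoped Classical ENNReal

/-- Extract the `Option Q` component from an `af` state. -/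
def getAf {Q : Type*} : ForkState Q → Option Q
  | .af q => q
  | _ => none

/-- Map `b0`/`bf` states to states of `B_f`. -/
def getB {Q : Type*} : ForkState Q → Option Unit
  | .bf => none
  | _ => some ()

lemma wcons_shift {L : Type*} (β : ℕ → L) :
    β = wcons (β 0) (wcons (β 1) (fun n => β (n + 2))) := by
  funext n
  match n with
  | 0 => rfl
  | 1 => rfl
  | n + 2 => rfl

/-- The run of `fork(A_f)` induced by a run `ρ` of `A_f` (case `q_A`). -/
def runA {Q : Type*} (ρ : ℕ → Option Q) : ℕ → ForkState Q
  | 0 => .qF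
  | 1 => .qA
  | n + 2 => .af (ρ n)

/-- The run of `fork(A_f)` induced by a run `ρ` of `B_f` (case `q_B`). -/
def runB {Q : Type*} (ρ : ℕ → Option Unit) : ℕ → ForkState Q
  | 0 => .qF
  | 1 => .qB
  | n + 2 => match ρ n with | some _ => .b0 | none => .bf

/-- For every complete NFA `A`,
`L(fork(A_f)) = {σσ'w : σ,σ' ∈ Σ_$, w ∈ L(A_f)} ∪ {σ$w : σ ∈ Σ_$, w ∈ L(B_f)}`. -/
theorem fork_lang {Γ Q : Type} [Fintype Γ] [Fintype Q]
    (A : NFAo Γ Q) (hA : A.Complete) :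
    (fork A).lang =
      {β : ℕ → Option Γ | ∃ (σ σ' : Option Γ) (w : ℕ → Option Γ),
          w ∈ A.dollar.lang ∧ β = wcons σ (wcons σ' w)} ∪
      {β : ℕ → Option Γ | ∃ (σ : Option Γ) (w : ℕ → Option Γ),
          w ∈ (unitNFA Γ).dollar.lang ∧ β = wcons σ (wcons none w)} := by
  ext β
  constructor
  · rintro ⟨r, ⟨hr0, hstep⟩, q, hq, hinf⟩
    have h1 : r 1 = ForkState.qA ∨ r 1 = ForkState.qB := by
      have := hstep 0
      rw [hr0] at this
      simpa [fork, forkStep] using this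
    rcases h1 with h1 | h1
    · -- case q_A : left part of the union
      have h2 : r 2 = ForkState.af (some A.init) := by
        have := hstep 1
        rw [h1] at this
        simpa [fork, forkStep] using this
      have key : ∀ n, ∃ q, r (n + 2) = ForkState.af q := by
        intro n
        induction n with
        | zero => exact ⟨some A.init, h2⟩
        | succ n ih =>
          obtain ⟨p, hp⟩ := ih
          have := hstep (n + 2)
          rw [hp] at this
          simp only [fork, forkStep, Set.mem_image] at this
          obtain ⟨x, _, hx⟩ := this
          exact ⟨x, hx.symm⟩
      have haf : ∀ n, r (n + 2) = ForkState.af (getAf (r (n + 2))) := by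
        intro n
        obtain ⟨p, hp⟩ := key n
        rw [hp]; rfl
      set ρ : ℕ → Option Q := fun n => getAf (r (n + 2)) with hρ
      have hρ0 : ρ 0 = some A.init := by simp [hρ, h2, getAf]
      have hρs : ∀ n, ρ (n + 1) ∈ A.dollarStep (ρ n) (β (n + 2)) := by
        intro n
        have := hstep (n + 2)
        rw [haf n] at this
        simp only [fork, forkStep, Set.mem_image] at this
        obtain ⟨x, hx, hxe⟩ := this
        have : ρ (n + 1) = x := by simp [hρ, ← hxe, getAf]
        rwa [this]
      have hqe : q = ForkState.af none := by
        rcases (show q = ForkState.af none ∨ q = ForkState.bf by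
          simpa [fork] using hq) with h | h
        · exact h
        · exfalso
          obtain ⟨m, hm2, hmq⟩ := hinf 2
          obtain ⟨k, rfl⟩ : ∃ k, m = k + 2 := ⟨m - 2, by omega⟩
          obtain ⟨p, hp⟩ := key k
          rw [hp, h] at hmq
          cases hmq
      refine Or.inl ⟨β 0, β 1, fun n => β (n + 2),
        ⟨ρ, ⟨hρ0, fun i => hρs i⟩, none, rfl, ?_⟩, wcons_shift β⟩
      intro n
      obtain ⟨m, hm, hmq⟩ := hinf (n + 2)
      obtain ⟨k, rfl⟩ : ∃ k, m = k + 2 := ⟨m - 2, by omega⟩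
      refine ⟨k, by omega, ?_⟩
      rw [hqe] at hmq
      simp [hρ, hmq, getAf]
    · -- case q_B : right part of the union
      have hβ1 : β 1 = none := by
        have := hstep 1
        rw [h1] at this
        cases hβ : β 1 with
        | none => rfl
        | some σ =>
          rw [hβ] at this
          simp [fork, forkStep] at this
      have h2 : r 2 = ForkState.b0 := by
        have := hstep 1
        rw [h1, hβ1] at this
        simpa [fork, forkStep] using this
      have key : ∀ n, r (n + 2) = ForkState.b0 ∨ r (n + 2) = ForkState.bf := by
        intro n
        induction n with
        | zero => exact Or.inl h2
        | succ n ih =>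
          have hs := hstep (n + 2)
          cases hβ : β (n + 2) with
          | none =>
            rcases ih with h | h <;> rw [h, hβ] at hs <;>
              exact Or.inr (by simpa [fork, forkStep] using hs)
          | some σ =>
            rcases ih with h | h <;> rw [h, hβ] at hs <;>
              exact Or.inl (by simpa [fork, forkStep] using hs)
      set ρ : ℕ → Option Unit := fun n => getB (r (n + 2)) with hρ
      have hρ0 : ρ 0 = some () := by simp [hρ, h2, getB]
      have hρs : ∀ n, ρ (n + 1) ∈ (unitNFA Γ).dollarStep (ρ n) (β (n + 2)) := by
        intro n
        have hs := hstep (n + 2)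
        have key1 := key (n + 1)
        cases hβ : β (n + 2) with
        | none =>
          have h3 : r (n + 3) = ForkState.bf := by
            rcases key n with h | h <;> rw [h, hβ] at hs <;>
              simpa [fork, forkStep] using hs
          have : ρ (n + 1) = none := by simp [hρ, h3, getB]
          rw [this]
          rcases key n with h | h <;>
            simp [hρ, h, getB, unitNFA, NFAo.dollarStep, NFAo.dollarStepAux]
        | some σ =>
          have h3 : r (n + 3) = ForkState.b0 := by
            rcases key n with h | h <;> rw [h, hβ] at hs <;>
              simpa [fork, forkStep] using hs
          have : ρ (n + 1) = some () := by simp [hρ, h3, getB]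
          rw [this]
          rcases key n with h | h <;>
            simp [hρ, h, getB, unitNFA, NFAo.dollarStep, NFAo.dollarStepAux]
      have hqe : q = ForkState.bf := by
        rcases (show q = ForkState.af none ∨ q = ForkState.bf by
          simpa [fork] using hq) with h | h
        · exfalso
          obtain ⟨m, hm2, hmq⟩ := hinf 2
          obtain ⟨k, rfl⟩ : ∃ k, m = k + 2 := ⟨m - 2, by omega⟩
          rcases key k with hk | hk <;> rw [hk, h] at hmq <;>
            cases hmq
        · exact h
      refine Or.inr ⟨β 0, fun n => β (n + 2),
        ⟨ρ, ⟨hρ0, fun i => hρs i⟩, none, rfl, ?_⟩, by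
          conv_lhs => rw [wcons_shift β]
          rw [hβ1]⟩
      intro n
      obtain ⟨m, hm, hmq⟩ := hinf (n + 2)
      obtain ⟨k, rfl⟩ : ∃ k, m = k + 2 := ⟨m - 2, by omega⟩
      refine ⟨k, by omega, ?_⟩
      rw [hqe] at hmq
      simp [hρ, hmq, getB]
  · rintro (⟨σ, σ', w, ⟨ρ, ⟨hρ0, hρs⟩, qa, hqa, hinf⟩, rfl⟩ |
            ⟨σ, w, ⟨ρ, ⟨hρ0, hρs⟩, qa, hqa, hinf⟩, rfl⟩)
    · refine ⟨runA ρ, ⟨rfl, ?_⟩, ForkState.af none, by simp [fork], ?_⟩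
      · intro i
        match i with
        | 0 => simp [runA, fork, forkStep, wcons]
        | 1 =>
          have : (A.dollar).init = some A.init := rfl
          rw [this] at hρ0
          simp [runA, fork, forkStep, wcons, hρ0]
        | n + 2 =>
          show ForkState.af (ρ (n + 1)) ∈ (fork A).step (ForkState.af (ρ n)) (w n)
          exact ⟨ρ (n + 1), hρs n, rfl⟩
      · intro n
        obtain ⟨m, hm, hmq⟩ := hinf n
        have : qa = none := hqa
        refine ⟨m + 2, by omega, ?_⟩
        show ForkState.af (ρ m) = _
        rw [hmq, this]
    · refine ⟨runB ρ, ⟨rfl, ?_⟩, ForkState.bf, by simp [fork], ?_⟩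
      · intro i
        match i with
        | 0 => simp [runB, fork, forkStep, wcons]
        | 1 =>
          have h0 : ρ 0 = some () := hρ0
          show runB ρ 2 ∈ (fork A).step ForkState.qB none
          simp [runB, h0, fork, forkStep]
        | n + 2 =>
          show runB ρ (n + 3) ∈ (fork A).step (runB ρ (n + 2)) (w n)
          have hs := hρs n
          cases hw : w n with
          | none =>
            rw [hw] at hs
            have h1 : ρ (n + 1) = none := by
              rcases hρn : ρ n with _ | u <;> rw [hρn] at hs <;>
                simpa [NFAo.dollar, NFAo.dollarStep, NFAo.dollarStepAux,
                  unitNFA] using hs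
            cases hρn : ρ n with
            | none => simp [runB, h1, hρn, fork, forkStep]
            | some u => simp [runB, h1, hρn, fork, forkStep]
          | some σ'' =>
            rw [hw] at hs
            have h1 : ρ (n + 1) = some () := by
              rcases hρn : ρ n with _ | u <;> rw [hρn] at hs <;>
                simpa [NFAo.dollar, NFAo.dollarStep, NFAo.dollarStepAux, unitNFA] using hs
            cases hρn : ρ n with
            | none => simp [runB, h1, hρn, fork, forkStep]
            | some u => simp [runB, h1, hρn, fork, forkStep]
      · intro n
        obtain ⟨m, hm, hmq⟩ := hinf n
        have hqn : qa = none := hqa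
        rw [hqn] at hmq
        refine ⟨m + 2, by omega, ?_⟩
        show runB ρ (m + 2) = _
        simp [runB, hmq]
end

section
/- For every finite MDP M, every initial state s₀, and every complete NBW N over the labelling alphabet of M, PSyn_N^M(s₀) ≤ PSem_N^M(s₀). -/
open scoped Classical ENNReal

/-! ### Auxiliary lemmas for `pathWeightAux` -/

namespace MDP
variable {S A L : Type*}

noncomputable def tpr (M : MDP S A L) (x : S × A) (y : S) : ℝ≥0∞ :=
  match M.prob x.1 x.2 with
  | none => 0
  | some p => p y

noncomputable def lkf (M : MDP S A L) (s : S) (l : List (S × A)) (t : S) : ℝ≥0∞ :=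
  match l.getLast? with
  | none => if t = s then 1 else 0
  | some x => M.tpr x t

variable (M : MDP S A L) (μ : M.Strategy)

theorem pwa_nil (hist) (s : S) : pathWeightAux M μ hist s [] = 1 := rfl

theorem pwa_single (hist) (s s' : S) (a : A) :
    pathWeightAux M μ hist s [(s', a)] = if s' = s then μ.act hist s a * 1 else 0 := rfl

theorem pwa_cons_cons (hist) (s s' s'' : S) (a b : A) (rest) :
    pathWeightAux M μ hist s ((s', a) :: (s'', b) :: rest) =
      if s' = s then
        μ.act hist s a * (M.tpr (s, a) s'' * pathWeightAux M μ (hist ++ [(s, a)]) s'' ((s'', b) :: rest))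
      else 0 := rfl

theorem pwa_snoc : ∀ (l : List (S × A)) (hist : List (S × A)) (s t : S) (b : A),
    pathWeightAux M μ hist s (l ++ [(t, b)]) =
      pathWeightAux M μ hist s l * M.lkf s l t * μ.act (hist ++ l) t b
  | [], hist, s, t, b => by
    by_cases h : t = s
    · subst h; simp [pwa_single, lkf, pathWeightAux]
    · simp [List.nil_append, pwa_single, lkf, h, pathWeightAux]
  | [(s₁, a₁)], hist, s, t, b => by
    rw [show ([(s₁, a₁)] ++ [(t, b)] : List (S × A)) = (s₁, a₁) :: (t, b) :: [] from rfl,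
      pwa_cons_cons, pwa_single]
    by_cases h : s₁ = s
    · subst h
      simp only [lkf, List.getLast?_singleton, if_pos rfl, pwa_single, tpr, ite_true, eq_self_iff_true]
      ring
    · rw [pwa_single]; simp [h]
  | (s₁, a₁) :: (s₂, a₂) :: l', hist, s, t, b => by
    by_cases h : s₁ = s
    · subst h
      rw [List.cons_append, List.cons_append, pwa_cons_cons, pwa_cons_cons, if_pos rfl,
        if_pos rfl, ← List.cons_append,
        pwa_snoc ((s₂, a₂) :: l') (hist ++ [(s₁, a₁)]) s₂ t b]
      have hla : ∃ y, ((s₂, a₂) :: l').getLast? = some y := by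
        cases l'' : ((s₂, a₂) :: l').getLast? with
        | none => simp at l''
        | some y => exact ⟨y, rfl⟩
      obtain ⟨y, hy⟩ := hla
      have hl : M.lkf s₁ ((s₁, a₁) :: (s₂, a₂) :: l') t = M.lkf s₂ ((s₂, a₂) :: l') t := by
        simp [lkf, List.getLast?_cons_cons, hy]
      rw [hl]
      simp only [lkf, hy, List.cons_append, List.append_assoc, List.singleton_append,
        List.nil_append]
      ring
    · rw [List.cons_append, List.cons_append, pwa_cons_cons, pwa_cons_cons, if_neg h, if_neg h,
        zero_mul, zero_mul]


theorem tpr_le_one (x : S × A) (y : S) : M.tpr x y ≤ 1 := by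
  unfold tpr
  cases M.prob x.1 x.2 with
  | none => exact zero_le_one
  | some p => exact p.coe_le_one y

theorem pwa_le_one : ∀ (l : List (S × A)) (hist : List (S × A)) (s : S),
    pathWeightAux M μ hist s l ≤ 1
  | [], _, _ => le_refl 1
  | [(s₁, a₁)], hist, s => by
    rw [pwa_single]
    split
    · exact mul_le_one' ((μ.act hist s).coe_le_one a₁) le_rfl
    · exact zero_le_one
  | (s₁, a₁) :: (s₂, a₂) :: rest, hist, s => by
    rw [pwa_cons_cons]
    split
    · exact mul_le_one' ((μ.act hist s).coe_le_one a₁)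
        (mul_le_one' (M.tpr_le_one _ _) (pwa_le_one ((s₂, a₂) :: rest) _ _))
    · exact zero_le_one

theorem pwa_zero_head (hist : List (S × A)) {s s' : S} (a : A) (rest : List (S × A))
    (h : s' ≠ s) : pathWeightAux M μ hist s ((s', a) :: rest) = 0 := by
  cases rest with
  | nil => rw [pwa_single, if_neg h]
  | cons x xs =>
    obtain ⟨s₂, a₂⟩ := x
    rw [pwa_cons_cons, if_neg h]

theorem pwa_eq_zero : ∀ (l : List (S × A)) (hist : List (S × A)) (s : S) (i : ℕ)
    (h1 : i + 1 < l.length),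
    M.tpr (l.get ⟨i, Nat.lt_of_succ_lt h1⟩) ((l.get ⟨i + 1, h1⟩).1) = 0 →
    pathWeightAux M μ hist s l = 0
  | (s₁, a₁) :: (s₂, a₂) :: rest, hist, s, 0, h1, h0 => by
    by_cases h : s₁ = s
    · subst h
      simp only [List.get] at h0
      rw [pwa_cons_cons, if_pos rfl, h0, zero_mul, mul_zero]
    · exact M.pwa_zero_head μ hist a₁ _ h
  | (s₁, a₁) :: (s₂, a₂) :: rest, hist, s, i + 1, h1, h0 => by
    by_cases h : s₁ = s
    · subst h
      have hrec := pwa_eq_zero ((s₂, a₂) :: rest) (hist ++ [(s₁, a₁)]) s₂ i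
        (by simpa using Nat.succ_lt_succ_iff.mp h1) (by simpa [List.get] using h0)
      rw [pwa_cons_cons, if_pos rfl, hrec, mul_zero, mul_zero]
    · exact M.pwa_zero_head μ hist a₁ _ h


theorem lkf_le_one (M : MDP S A L) (s : S) (l : List (S × A)) (t : S) : M.lkf s l t ≤ 1 := by
  unfold lkf
  split
  · split <;> simp
  · exact M.tpr_le_one _ t

end MDP


/-! ### The projection of a product strategy -/

section Projection

set_option linter.unusedSectionVars false

variable {S A L Q : Type} [Fintype S] [Fintype A] [Fintype L] [Fintype Q]
variable (M : MDP S A L) (N : NBW L Q) (s₀ : S)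

/-- Decorate a base path with Büchi states. -/
def decP {n : ℕ} (v : Fin n → S × A) (w : Fin n → Q × Q) : Fin n → (S × Q) × (A × Q) :=
  fun i => (((v i).1, (w i).1), ((v i).2, (w i).2))

noncomputable def pwP (μp : (M.prod N).Strategy) {n : ℕ} (v : Fin n → S × A)
    (w : Fin n → Q × Q) : ℝ≥0∞ :=
  MDP.pathWeightAux (M.prod N) μp [] (s₀, N.init) (List.ofFn (decP v w))

noncomputable def nuF (μp : (M.prod N).Strategy) {n : ℕ} (v : Fin n → S × A) (t : S)
    (a : A) : ℝ≥0∞ :=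
  ∑ w : Fin n → Q × Q, ∑ q : Q, ∑ q' : Q,
    pwP M N s₀ μp v w * (M.prod N).lkf (s₀, N.init) (List.ofFn (decP v w)) (t, q) *
      μp.act (List.ofFn (decP v w)) (t, q) (a, q')

noncomputable def denF (μp : (M.prod N).Strategy) {n : ℕ} (v : Fin n → S × A) (t : S) : ℝ≥0∞ :=
  ∑ a : A, nuF M N s₀ μp v t a

theorem sum_swap3 {α β γ : Type*} [Fintype α] [Fintype β] [Fintype γ]
    (f : α → β → γ → ℝ≥0∞) :
    ∑ a : α, ∑ b : β, ∑ c : γ, f a b c = ∑ c : γ, ∑ a : α, ∑ b : β, f a b c :=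
  calc ∑ a : α, ∑ b : β, ∑ c : γ, f a b c
      = ∑ a : α, ∑ c : γ, ∑ b : β, f a b c :=
        Finset.sum_congr rfl fun a _ => Finset.sum_comm
    _ = ∑ c : γ, ∑ a : α, ∑ b : β, f a b c := Finset.sum_comm

theorem nuF_congr (μp : (M.prod N).Strategy) {n m : ℕ} (h : n = m) (v : Fin n → S × A)
    (v' : Fin m → S × A) (hv : ∀ i : Fin m, v' i = v (Fin.cast h.symm i)) (t : S) (a : A) :
    nuF M N s₀ μp v' t a = nuF M N s₀ μp v t a := by
  subst h
  have hvv : v' = v := funext fun i => by simpa using hv i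
  rw [hvv]

theorem denF_congr (μp : (M.prod N).Strategy) {n m : ℕ} (h : n = m) (v : Fin n → S × A)
    (v' : Fin m → S × A) (hv : ∀ i : Fin m, v' i = v (Fin.cast h.symm i)) (t : S) :
    denF M N s₀ μp v' t = denF M N s₀ μp v t :=
  Finset.sum_congr rfl fun a _ => nuF_congr M N s₀ μp h v v' hv t a

theorem nuF_ne_top (μp : (M.prod N).Strategy) {n : ℕ} (v : Fin n → S × A) (t : S) (a : A) :
    nuF M N s₀ μp v t a ≠ ⊤ := by
  have : nuF M N s₀ μp v t a < ⊤ := by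
    unfold nuF
    refine ENNReal.sum_lt_top.2 fun w _ => ENNReal.sum_lt_top.2 fun q _ =>
      ENNReal.sum_lt_top.2 fun q' _ => ?_
    exact lt_of_le_of_lt
      (mul_le_one' (mul_le_one' (MDP.pwa_le_one _ _ _ _ _) (MDP.lkf_le_one _ _ _ _))
        ((μp.act _ _).coe_le_one _)) ENNReal.one_lt_top
  exact this.ne

theorem denF_ne_top (μp : (M.prod N).Strategy) {n : ℕ} (v : Fin n → S × A) (t : S) :
    denF M N s₀ μp v t ≠ ⊤ := by
  have : denF M N s₀ μp v t < ⊤ :=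
    ENNReal.sum_lt_top.2 fun a _ => (nuF_ne_top M N s₀ μp v t a).lt_top
  exact this.ne

theorem sum_div_denF (μp : (M.prod N).Strategy) {n : ℕ} (v : Fin n → S × A) (t : S)
    (hd : denF M N s₀ μp v t ≠ 0) :
    ∑ a : A, nuF M N s₀ μp v t a / denF M N s₀ μp v t = 1 := by
  simp_rw [div_eq_mul_inv]
  rw [← Finset.sum_mul]
  exact ENNReal.mul_inv_cancel hd (denF_ne_top M N s₀ μp v t)

theorem prod_nonblocking (hM : M.NonBlocking) (hN : N.Complete) : (M.prod N).NonBlocking := by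
  rintro ⟨t, q⟩
  obtain ⟨a, ha⟩ := hM t
  obtain ⟨q', hq'⟩ := hN q (M.label t)
  refine ⟨(a, q'), ?_⟩
  unfold MDP.enabled MDP.prod at *
  simp only [if_pos hq']
  simpa using ha

theorem enabled_of_prod {t : S} {q : Q} {a : A} {q' : Q}
    (h : (M.prod N).enabled (t, q) (a, q')) : M.enabled t a := by
  unfold MDP.enabled MDP.prod at *
  by_cases hs : q' ∈ N.step q (M.label t)
  · simp only [if_pos hs] at h; simpa using h
  · simp [hs] at h

/-- The strategy on `M` induced by a strategy on the product MDP. -/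
noncomputable def proj (hM : M.NonBlocking) (hN : N.Complete) (μp : (M.prod N).Strategy) :
    M.Strategy := by
  refine ⟨fun h t =>
    if hd : denF M N s₀ μp (fun i : Fin h.length => h.get i) t = 0 then
      PMF.pure (hM t).choose
    else
      PMF.ofFintype
        (fun a => nuF M N s₀ μp (fun i : Fin h.length => h.get i) t a /
          denF M N s₀ μp (fun i : Fin h.length => h.get i) t)
        (sum_div_denF M N s₀ μp _ t hd), ?_⟩
  intro h t _ a ha
  by_cases hd : denF M N s₀ μp (fun i : Fin h.length => h.get i) t = 0
  · rw [dif_pos hd] at ha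
    rw [PMF.support_pure, Set.mem_singleton_iff] at ha
    rw [ha]
    exact (hM t).choose_spec
  · rw [dif_neg hd] at ha
    rw [PMF.mem_support_iff, PMF.ofFintype_apply] at ha
    have hnu : nuF M N s₀ μp (fun i : Fin h.length => h.get i) t a ≠ 0 := by
      intro h0; exact ha (by rw [h0, ENNReal.zero_div])
    unfold nuF at hnu
    obtain ⟨w, -, hw⟩ := Finset.exists_ne_zero_of_sum_ne_zero hnu
    obtain ⟨q, -, hq⟩ := Finset.exists_ne_zero_of_sum_ne_zero hw
    obtain ⟨q', -, hq'⟩ := Finset.exists_ne_zero_of_sum_ne_zero hq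
    have hact : μp.act (List.ofFn (decP (fun i : Fin h.length => h.get i) w)) (t, q)
        (a, q') ≠ 0 := by
      intro h0; exact hq' (by rw [h0, mul_zero])
    have hen : (M.prod N).enabled (t, q) (a, q') :=
      μp.supp (List.ofFn (decP (fun i : Fin h.length => h.get i) w)) (t, q)
        (prod_nonblocking M N hM hN (t, q)) (a, q')
        (PMF.mem_support_iff _ _ |>.mpr hact)
    exact enabled_of_prod M N hen

theorem pmap_pair (p : PMF S) (qq : Q) (t : S) (q : Q) :
    (p.map fun s' => (s', qq)) (t, q) = if q = qq then p t else 0 := by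
  rw [PMF.map_apply]
  by_cases hq : q = qq
  · subst hq
    rw [if_pos rfl]
    refine (tsum_eq_single t fun b hb =>
      if_neg fun hc => hb ((Prod.ext_iff.1 hc).1).symm).trans ?_
    rw [if_pos rfl]
  · rw [if_neg hq]
    exact (tsum_congr fun s' =>
      if_neg fun hc => hq (Prod.ext_iff.1 hc).2).trans tsum_zero

theorem tpr_prod (x : (S × Q) × (A × Q)) (y : S × Q) :
    (M.prod N).tpr x y =
      if x.2.2 ∈ N.step x.1.2 (M.label x.1.1) ∧ y.2 = x.2.2 then
        M.tpr (x.1.1, x.2.1) y.1 else 0 := by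
  unfold MDP.tpr MDP.prod
  by_cases hs : x.2.2 ∈ N.step x.1.2 (M.label x.1.1)
  · simp only [hs, if_true, true_and]
    cases hp : M.prob x.1.1 x.2.1 with
    | none => simp [hp]
    | some p =>
      simp only [hp, Option.map_some]
      rw [show y = (y.1, y.2) from rfl, pmap_pair p x.2.2 y.1 y.2]
  · simp only [hs, if_false, false_and]

theorem sum_lkf_prod (μp : (M.prod N).Strategy) {n : ℕ} (v : Fin n → S × A)
    (w : Fin n → Q × Q) (t : S) :
    ∑ q : Q, (M.prod N).lkf (s₀, N.init) (List.ofFn (decP v w)) (t, q) ≤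
      M.lkf s₀ (List.ofFn v) t := by
  cases n with
  | zero =>
    simp only [List.ofFn_zero, MDP.lkf, List.getLast?_nil, Prod.mk.injEq]
    by_cases ht : t = s₀
    · simp only [ht, true_and, if_true]
      simp [Finset.sum_ite_eq']
    · simp [ht]
  | succ m =>
    have hlast : (List.ofFn (decP v w)).getLast? = some (decP v w (Fin.last m)) := by
      rw [List.ofFn_succ', List.concat_eq_append]
      simp
    have hlastM : (List.ofFn v).getLast? = some (v (Fin.last m)) := by
      rw [List.ofFn_succ', List.concat_eq_append]
      simp
    simp only [MDP.lkf, hlast, hlastM]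
    have hterm : ∀ q : Q, (M.prod N).tpr (decP v w (Fin.last m)) (t, q) =
        if (w (Fin.last m)).2 ∈ N.step (w (Fin.last m)).1 (M.label (v (Fin.last m)).1) ∧
            q = (w (Fin.last m)).2 then
          M.tpr (v (Fin.last m)) t else 0 := by
      intro q
      rw [tpr_prod]
      rfl
    rw [Finset.sum_congr rfl fun q _ => hterm q]
    by_cases hstep : (w (Fin.last m)).2 ∈ N.step (w (Fin.last m)).1 (M.label (v (Fin.last m)).1)
    · simp only [hstep, true_and]
      rw [Finset.sum_ite_eq' Finset.univ ((w (Fin.last m)).2)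
        (fun _ => M.tpr (v (Fin.last m)) t)]
      simp
    · simp [hstep]

theorem claimA (hM : M.NonBlocking) (hN : N.Complete) (μp : (M.prod N).Strategy) :
    ∀ (n : ℕ) (v : Fin n → S × A),
      (∑ w : Fin n → Q × Q, pwP M N s₀ μp v w) ≤
        MDP.pathWeightAux M (proj M N s₀ hM hN μp) [] s₀ (List.ofFn v)
  | 0, v => by
    have h1 : ∀ w : Fin 0 → Q × Q, pwP M N s₀ μp v w = 1 := fun w => by
      simp [pwP, List.ofFn_zero, MDP.pathWeightAux]
    rw [Finset.sum_congr rfl fun w _ => h1 w, List.ofFn_zero]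
    simp [MDP.pathWeightAux]
  | n + 1, v => by
    set μ' := proj M N s₀ hM hN μp with hμ'
    set v0 : Fin n → S × A := fun i => v i.castSucc with hv0
    set x := v (Fin.last n) with hx
    have hofn : List.ofFn v = List.ofFn v0 ++ [(x.1, x.2)] := by
      rw [List.ofFn_succ', List.concat_eq_append]
    rw [hofn, MDP.pwa_snoc, List.nil_append]
    -- reindex LHS
    have hre : (∑ w : Fin (n + 1) → Q × Q, pwP M N s₀ μp v w) =
        ∑ p : (Q × Q) × (Fin n → Q × Q), pwP M N s₀ μp v (Fin.snoc p.2 p.1) := by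
      rw [← Equiv.sum_comp (Fin.snocEquiv fun _ => Q × Q) (fun w => pwP M N s₀ μp v w)]
      exact Finset.sum_congr rfl fun p _ => rfl
    rw [hre, Fintype.sum_prod_type]
    have hterm : ∀ (y : Q × Q) (w0 : Fin n → Q × Q),
        pwP M N s₀ μp v (Fin.snoc w0 y) =
          pwP M N s₀ μp v0 w0 *
            (M.prod N).lkf (s₀, N.init) (List.ofFn (decP v0 w0)) (x.1, y.1) *
            μp.act (List.ofFn (decP v0 w0)) (x.1, y.1) (x.2, y.2) := by
      intro y w0
      have hdec : List.ofFn (decP v (Fin.snoc w0 y)) =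
          List.ofFn (decP v0 w0) ++ [((x.1, y.1), (x.2, y.2))] := by
        rw [List.ofFn_succ', List.concat_eq_append]
        congr 1
        · congr 1
          funext i
          simp [decP, Fin.snoc_castSucc, hv0]
        · simp [decP, Fin.snoc_last, hx]
      unfold pwP
      rw [hdec, MDP.pwa_snoc]
      simp
    rw [Finset.sum_congr rfl fun y _ => Finset.sum_congr rfl fun w0 _ => hterm y w0]
    -- the sum equals nuF v0 x.1 x.2
    have hnu : (∑ y : Q × Q, ∑ w0 : Fin n → Q × Q,
        pwP M N s₀ μp v0 w0 *
          (M.prod N).lkf (s₀, N.init) (List.ofFn (decP v0 w0)) (x.1, y.1) *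
          μp.act (List.ofFn (decP v0 w0)) (x.1, y.1) (x.2, y.2)) =
        nuF M N s₀ μp v0 x.1 x.2 := by
      rw [Fintype.sum_prod_type]
      unfold nuF
      exact sum_swap3 _
    rw [hnu]
    -- claim B : denF ≤ pwa * lkf
    have hIH := claimA hM hN μp n v0
    have hden : denF M N s₀ μp v0 x.1 ≤
        MDP.pathWeightAux M μ' [] s₀ (List.ofFn v0) * M.lkf s₀ (List.ofFn v0) x.1 := by
      unfold denF nuF
      rw [Finset.sum_comm]
      have hw1 : ∀ w0 : Fin n → Q × Q,
          (∑ a : A, ∑ q : Q, ∑ q' : Q,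
            pwP M N s₀ μp v0 w0 *
              (M.prod N).lkf (s₀, N.init) (List.ofFn (decP v0 w0)) (x.1, q) *
              μp.act (List.ofFn (decP v0 w0)) (x.1, q) (a, q')) =
          pwP M N s₀ μp v0 w0 *
            ∑ q : Q, (M.prod N).lkf (s₀, N.init) (List.ofFn (decP v0 w0)) (x.1, q) := by
        intro w0
        rw [Finset.sum_comm]
        rw [Finset.mul_sum]
        refine Finset.sum_congr rfl fun q _ => ?_
        have hone : (∑ a : A, ∑ q' : Q,
            μp.act (List.ofFn (decP v0 w0)) (x.1, q) (a, q')) = 1 := by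
          rw [← Fintype.sum_prod_type, ← tsum_fintype (L := SummationFilter.unconditional _)]
          exact (μp.act (List.ofFn (decP v0 w0)) (x.1, q)).tsum_coe
        calc (∑ a : A, ∑ q' : Q,
              pwP M N s₀ μp v0 w0 *
                (M.prod N).lkf (s₀, N.init) (List.ofFn (decP v0 w0)) (x.1, q) *
                μp.act (List.ofFn (decP v0 w0)) (x.1, q) (a, q')) =
            pwP M N s₀ μp v0 w0 *
              (M.prod N).lkf (s₀, N.init) (List.ofFn (decP v0 w0)) (x.1, q) *
              (∑ a : A, ∑ q' : Q, μp.act (List.ofFn (decP v0 w0)) (x.1, q) (a, q')) := by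
              rw [Finset.mul_sum]
              refine Finset.sum_congr rfl fun a _ => ?_
              rw [Finset.mul_sum]
          _ = pwP M N s₀ μp v0 w0 *
              (M.prod N).lkf (s₀, N.init) (List.ofFn (decP v0 w0)) (x.1, q) := by
              rw [hone, mul_one]
      rw [Finset.sum_congr rfl fun w0 _ => hw1 w0]
      calc (∑ w0 : Fin n → Q × Q, pwP M N s₀ μp v0 w0 *
              ∑ q : Q, (M.prod N).lkf (s₀, N.init) (List.ofFn (decP v0 w0)) (x.1, q)) ≤
          ∑ w0 : Fin n → Q × Q, pwP M N s₀ μp v0 w0 * M.lkf s₀ (List.ofFn v0) x.1 :=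
            Finset.sum_le_sum fun w0 _ =>
              mul_le_mul_right (sum_lkf_prod M N s₀ μp v0 w0 x.1) _
        _ = (∑ w0 : Fin n → Q × Q, pwP M N s₀ μp v0 w0) * M.lkf s₀ (List.ofFn v0) x.1 := by
            rw [Finset.sum_mul]
        _ ≤ MDP.pathWeightAux M μ' [] s₀ (List.ofFn v0) * M.lkf s₀ (List.ofFn v0) x.1 :=
            mul_le_mul_left hIH _
    -- identify the strategy value
    have hgetlen : n = (List.ofFn v0).length := (List.length_ofFn (f := v0)).symm
    have hget : ∀ i : Fin (List.ofFn v0).length,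
        (fun i : Fin (List.ofFn v0).length => (List.ofFn v0).get i) i =
          v0 (Fin.cast hgetlen.symm i) := by
      intro i
      simp only [List.get_ofFn]
    have hnucongr : ∀ a : A,
        nuF M N s₀ μp (fun i : Fin (List.ofFn v0).length => (List.ofFn v0).get i) x.1 a =
          nuF M N s₀ μp v0 x.1 a :=
      fun a => nuF_congr M N s₀ μp hgetlen v0 _ (fun i => hget i) x.1 a
    have hdencongr :
        denF M N s₀ μp (fun i : Fin (List.ofFn v0).length => (List.ofFn v0).get i) x.1 =
          denF M N s₀ μp v0 x.1 :=
      denF_congr M N s₀ μp hgetlen v0 _ (fun i => hget i) x.1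
    by_cases hd : denF M N s₀ μp v0 x.1 = 0
    · -- numerator is zero
      have : nuF M N s₀ μp v0 x.1 x.2 = 0 := by
        have hle : nuF M N s₀ μp v0 x.1 x.2 ≤ denF M N s₀ μp v0 x.1 :=
          Finset.single_le_sum (f := fun a => nuF M N s₀ μp v0 x.1 a)
            (fun a _ => zero_le) (Finset.mem_univ x.2)
        exact le_antisymm (hd ▸ hle) zero_le
      rw [this]
      exact zero_le
    · have hact : μ'.act (List.ofFn v0) x.1 x.2 =
          nuF M N s₀ μp v0 x.1 x.2 / denF M N s₀ μp v0 x.1 := by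
        show (proj M N s₀ hM hN μp).act (List.ofFn v0) x.1 x.2 = _
        unfold proj
        simp only []
        rw [dif_neg (by rw [hdencongr]; exact hd)]
        rw [PMF.ofFintype_apply, hnucongr x.2, hdencongr]
      rw [hact]
      calc nuF M N s₀ μp v0 x.1 x.2 =
          nuF M N s₀ μp v0 x.1 x.2 / denF M N s₀ μp v0 x.1 * denF M N s₀ μp v0 x.1 := by
            rw [ENNReal.div_mul_cancel hd (denF_ne_top M N s₀ μp v0 x.1)]
        _ ≤ nuF M N s₀ μp v0 x.1 x.2 / denF M N s₀ μp v0 x.1 *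
            (MDP.pathWeightAux M μ' [] s₀ (List.ofFn v0) * M.lkf s₀ (List.ofFn v0) x.1) :=
            mul_le_mul_right hden _
        _ = MDP.pathWeightAux M μ' [] s₀ (List.ofFn v0) * M.lkf s₀ (List.ofFn v0) x.1 *
            (nuF M N s₀ μp v0 x.1 x.2 / denF M N s₀ μp v0 x.1) := by ring

end Projection


/-! ### Measure comparison -/

section Measure

set_option linter.unusedSectionVars false

variable {S A L Q : Type} [Fintype S] [Fintype A] [Fintype L] [Fintype Q]
variable (M : MDP S A L) (N : NBW L Q) (s₀ : S)

/-- Projection of product runs to base runs. -/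
def phi (r : ℕ → (S × Q) × (A × Q)) : ℕ → S × A := fun n => ((r n).1.1, (r n).2.1)

def decEquiv (n : ℕ) : ((Fin n → S × A) × (Fin n → Q × Q)) ≃ (Fin n → (S × Q) × (A × Q)) where
  toFun p := decP p.1 p.2
  invFun u := (fun i => ((u i).1.1, (u i).2.1), fun i => ((u i).1.2, (u i).2.2))
  left_inv p := rfl
  right_inv u := rfl

theorem horizon_le (hM : M.NonBlocking) (hN : N.Complete) (μp : (M.prod N).Strategy)
    (n : ℕ) (G : Set (ℕ → S × A)) :
    MDP.horizonProb (M.prod N) μp (s₀, N.init) n (phi ⁻¹' G) ≤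
      MDP.horizonProb M (proj M N s₀ hM hN μp) s₀ n G := by
  unfold MDP.horizonProb
  rw [← Equiv.sum_comp (decEquiv (S := S) (A := A) (Q := Q) n)
    (fun u : Fin n → (S × Q) × (A × Q) =>
      if ∃ r ∈ phi ⁻¹' G, prefList r n = List.ofFn u then
        MDP.pathWeightAux (M.prod N) μp [] (s₀, N.init) (List.ofFn u) else 0),
    Fintype.sum_prod_type]
  refine Finset.sum_le_sum fun v _ => ?_
  by_cases hv : ∃ r ∈ G, prefList r n = List.ofFn v
  · rw [if_pos hv]
    refine le_trans (Finset.sum_le_sum fun w _ => ?_) (claimA M N s₀ hM hN μp n v)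
    split
    · exact le_rfl
    · exact zero_le
  · rw [if_neg hv]
    refine le_of_eq (Finset.sum_eq_zero fun w _ => ?_)
    rw [if_neg]
    rintro ⟨r, hrG, hpref⟩
    refine hv ⟨phi r, hrG, ?_⟩
    unfold prefList at hpref ⊢
    refine List.ofFn_inj.2 (funext fun i => ?_)
    have hri := congrFun (List.ofFn_inj.1 hpref) i
    show ((r ↑i).1.1, (r ↑i).2.1) = v i
    rw [hri]; rfl

theorem cyl_pre {G : Set (ℕ → S × A)} {n : ℕ} (h : MDP.IsCylinderAt G n) :
    MDP.IsCylinderAt (phi (S := S) (A := A) (Q := Q) ⁻¹' G) n := by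
  intro r r' hpre hr
  refine h (phi r) (phi r') ?_ hr
  unfold prefList
  exact List.ofFn_inj.2 (funext fun i =>
    congrArg (fun z : (S × Q) × (A × Q) => (z.1.1, z.2.1))
      (congrFun (List.ofFn_inj.1 hpre) i))

theorem preM_le (hM : M.NonBlocking) (hN : N.Complete) (μp : (M.prod N).Strategy)
    (G : Set (ℕ → S × A)) :
    MDP.preMeasure (M.prod N) μp (s₀, N.init) (phi ⁻¹' G) ≤
      MDP.preMeasure M (proj M N s₀ hM hN μp) s₀ G := by
  refine le_iInf fun n => le_iInf fun hc => ?_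
  exact le_trans (iInf₂_le n (cyl_pre hc)) (horizon_le M N s₀ hM hN μp n G)

theorem Pr_le (hM : M.NonBlocking) (hN : N.Complete) (μp : (M.prod N).Strategy)
    (G : Set (ℕ → S × A)) :
    MDP.Pr (M.prod N) μp (s₀, N.init) (phi ⁻¹' G) ≤
      MDP.Pr M (proj M N s₀ hM hN μp) s₀ G := by
  conv_rhs => rw [MDP.Pr, MeasureTheory.OuterMeasure.ofFunction_apply]
  refine le_iInf fun t => le_iInf fun ht => ?_
  calc MDP.Pr (M.prod N) μp (s₀, N.init) (phi ⁻¹' G)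
      ≤ MDP.Pr (M.prod N) μp (s₀, N.init) (⋃ i, phi ⁻¹' (t i)) := by
        refine MeasureTheory.measure_mono ?_
        rw [← Set.preimage_iUnion]
        exact Set.preimage_mono ht
    _ ≤ ∑' i, MDP.Pr (M.prod N) μp (s₀, N.init) (phi ⁻¹' (t i)) := MeasureTheory.measure_iUnion_le _
    _ ≤ ∑' i, MDP.preMeasure (M.prod N) μp (s₀, N.init) (phi ⁻¹' (t i)) :=
        ENNReal.tsum_le_tsum fun i => MeasureTheory.OuterMeasure.ofFunction_le _
    _ ≤ ∑' i, MDP.preMeasure M (proj M N s₀ hM hN μp) s₀ (t i) :=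
        ENNReal.tsum_le_tsum fun i => preM_le M N s₀ hM hN μp (t i)

/-- Runs of the product starting with a wrong automaton component. -/
def badQ0 : Set (ℕ → (S × Q) × (A × Q)) := {r | (r 0).1.2 ≠ N.init}

/-- Runs of the product violating the automaton transition structure at step `i`. -/
def badQ (i : ℕ) : Set (ℕ → (S × Q) × (A × Q)) :=
  {r | ¬((r i).2.2 ∈ N.step ((r i).1.2) (M.label ((r i).1.1)) ∧
      (r (i + 1)).1.2 = (r i).2.2)}

theorem Pr_badQ0 (μp : (M.prod N).Strategy) :
    MDP.Pr (M.prod N) μp (s₀, N.init) (badQ0 (S := S) (A := A) N) = 0 := by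
  refine le_antisymm ?_ zero_le
  refine le_trans (MeasureTheory.OuterMeasure.ofFunction_le _) ?_
  refine le_trans (iInf₂_le 1 ?_) ?_
  · intro r r' hpre hr
    have h0 := congrFun (List.ofFn_inj.1 hpre) (0 : Fin 1)
    show (r' 0).1.2 ≠ N.init
    rw [show r' 0 = r 0 from h0.symm]
    exact hr
  · unfold MDP.horizonProb
    refine le_of_eq (Finset.sum_eq_zero fun u _ => ?_)
    by_cases hcond : ∃ r ∈ badQ0 (S := S) (A := A) N, prefList r 1 = List.ofFn u
    · rw [if_pos hcond]
      obtain ⟨r, hr, hpref⟩ := hcond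
      have h0 : r 0 = u 0 := congrFun (List.ofFn_inj.1 hpref) (0 : Fin 1)
      have hne : (u 0).1 ≠ (s₀, N.init) := by
        intro hc
        exact hr (by rw [show r 0 = u 0 from h0, hc])
      have hl : List.ofFn u = [u 0] := by
        rw [List.ofFn_succ, List.ofFn_zero]
      rw [hl]
      exact MDP.pwa_zero_head _ μp [] (u 0).2 [] hne
    · rw [if_neg hcond]

theorem Pr_badQ (μp : (M.prod N).Strategy) (i : ℕ) :
    MDP.Pr (M.prod N) μp (s₀, N.init) (badQ M N i) = 0 := by
  refine le_antisymm ?_ zero_le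
  refine le_trans (MeasureTheory.OuterMeasure.ofFunction_le _) ?_
  refine le_trans (iInf₂_le (i + 2) ?_) ?_
  · intro r r' hpre hr
    have hi := congrFun (List.ofFn_inj.1 hpre) (⟨i, by omega⟩ : Fin (i + 2))
    have hi1 := congrFun (List.ofFn_inj.1 hpre) (⟨i + 1, by omega⟩ : Fin (i + 2))
    show ¬ _
    rw [show r' i = r i from hi.symm, show r' (i + 1) = r (i + 1) from hi1.symm]
    exact hr
  · unfold MDP.horizonProb
    refine le_of_eq (Finset.sum_eq_zero fun u _ => ?_)
    by_cases hcond : ∃ r ∈ badQ M N i, prefList r (i + 2) = List.ofFn u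
    · rw [if_pos hcond]
      obtain ⟨r, hr, hpref⟩ := hcond
      have hi : r i = u ⟨i, by omega⟩ :=
        congrFun (List.ofFn_inj.1 hpref) (⟨i, by omega⟩ : Fin (i + 2))
      have hi1 : r (i + 1) = u ⟨i + 1, by omega⟩ :=
        congrFun (List.ofFn_inj.1 hpref) (⟨i + 1, by omega⟩ : Fin (i + 2))
      have hbad : ¬((u ⟨i, by omega⟩ : (S × Q) × (A × Q)).2.2 ∈
            N.step ((u ⟨i, by omega⟩).1.2) (M.label ((u ⟨i, by omega⟩).1.1)) ∧
          (u ⟨i + 1, by omega⟩ : (S × Q) × (A × Q)).1.2 = (u ⟨i, by omega⟩).2.2) := by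
        rw [← hi, ← hi1]
        exact hr
      have hlen : i + 1 < (List.ofFn u).length := by
        rw [List.length_ofFn]; omega
      refine MDP.pwa_eq_zero (M.prod N) μp (List.ofFn u) [] (s₀, N.init) i hlen ?_
      have hg1 : (List.ofFn u).get ⟨i, Nat.lt_of_succ_lt hlen⟩ = u ⟨i, by omega⟩ :=
        List.get_ofFn u ⟨i, Nat.lt_of_succ_lt hlen⟩
      have hg2 : (List.ofFn u).get ⟨i + 1, hlen⟩ = u ⟨i + 1, by omega⟩ :=
        List.get_ofFn u ⟨i + 1, hlen⟩
      rw [hg1, hg2, tpr_prod, if_neg hbad]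
    · rw [if_neg hcond]

end Measure

/-- For every finite MDP, initial state and complete NBW over the
labelling alphabet, `PSyn ≤ PSem`. -/
theorem psyn_le_psem {S A L Q : Type} [Fintype S] [Fintype A] [Fintype L] [Fintype Q]
    (M : MDP S A L) (hM : M.NonBlocking) (N : NBW L Q) (hN : N.Complete) (s₀ : S) :
    PSyn N M s₀ ≤ PSem N M s₀ := by
  unfold PSyn PSem
  refine iSup_le fun μp => ?_
  refine le_trans ?_ (le_iSup _ (proj M N s₀ hM hN μp))
  have hsub : {r : ℕ → (S × Q) × (A × Q) | ∀ n, ∃ m, n ≤ m ∧ (r m).1.2 ∈ N.acc} ⊆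
      (phi ⁻¹' {r : ℕ → S × A | (fun n => M.label (r n).1) ∈ N.lang}) ∪
        (badQ0 (S := S) (A := A) N ∪ ⋃ i, badQ M N i) := by
    intro r hr
    by_cases hb : r ∈ badQ0 (S := S) (A := A) N ∪ ⋃ i, badQ M N i
    · exact Or.inr hb
    · left
      obtain ⟨hb0, hbU⟩ := not_or.1 (Set.mem_union _ _ _ |>.not.1 hb)
      have hb0' : (r 0).1.2 = N.init := not_not.1 hb0
      have hbi : ∀ i, (r i).2.2 ∈ N.step ((r i).1.2) (M.label ((r i).1.1)) ∧
          (r (i + 1)).1.2 = (r i).2.2 := by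
        intro i
        by_contra hc
        exact hbU (Set.mem_iUnion.2 ⟨i, hc⟩)
      refine Set.mem_preimage.2 ?_
      show (fun n => M.label ((phi r n).1)) ∈ N.lang
      refine ⟨fun n => (r n).1.2, ⟨hb0', fun i => ?_⟩, ?_⟩
      · show (r (i + 1)).1.2 ∈ N.step ((r i).1.2) _
        rw [(hbi i).2]
        exact (hbi i).1
      · by_contra hno
        unfold NBW.Accepting at hno
        push_neg at hno
        have hg : ∀ q : Q, ∃ n : ℕ, q ∈ N.acc → ∀ m, n ≤ m → (r m).1.2 ≠ q := by
          intro q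
          by_cases hq : q ∈ N.acc
          · obtain ⟨n, hn⟩ := hno q hq
            exact ⟨n, fun _ => hn⟩
          · exact ⟨0, fun hc => absurd hc hq⟩
        choose g hgs using hg
        obtain ⟨m, hBm, hm⟩ := hr (Finset.univ.sup g)
        exact hgs ((r m).1.2) hm m
          (le_trans (Finset.le_sup (Finset.mem_univ _)) hBm) rfl
  have hU : MDP.Pr (M.prod N) μp (s₀, N.init) (⋃ i, badQ M N i) = 0 :=
    le_antisymm (le_trans (MeasureTheory.measure_iUnion_le _)
      (by simp [Pr_badQ M N s₀ μp])) zero_le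
  calc MDP.Pr (M.prod N) μp (s₀, N.init) {r | ∀ n, ∃ m, n ≤ m ∧ (r m).1.2 ∈ N.acc}
      ≤ MDP.Pr (M.prod N) μp (s₀, N.init)
          ((phi ⁻¹' {r : ℕ → S × A | (fun n => M.label (r n).1) ∈ N.lang}) ∪
            (badQ0 (S := S) (A := A) N ∪ ⋃ i, badQ M N i)) :=
        MeasureTheory.measure_mono hsub
    _ ≤ MDP.Pr (M.prod N) μp (s₀, N.init)
          (phi ⁻¹' {r : ℕ → S × A | (fun n => M.label (r n).1) ∈ N.lang}) +
        MDP.Pr (M.prod N) μp (s₀, N.init)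
          (badQ0 (S := S) (A := A) N ∪ ⋃ i, badQ M N i) :=
        MeasureTheory.measure_union_le _ _
    _ ≤ MDP.Pr (M.prod N) μp (s₀, N.init)
          (phi ⁻¹' {r : ℕ → S × A | (fun n => M.label (r n).1) ∈ N.lang}) +
        (MDP.Pr (M.prod N) μp (s₀, N.init) (badQ0 (S := S) (A := A) N) +
          MDP.Pr (M.prod N) μp (s₀, N.init) (⋃ i, badQ M N i)) :=
        add_le_add_right (MeasureTheory.measure_union_le _ _) _
    _ = MDP.Pr (M.prod N) μp (s₀, N.init)
          (phi ⁻¹' {r : ℕ → S × A | (fun n => M.label (r n).1) ∈ N.lang}) := by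
        rw [Pr_badQ0 M N s₀ μp, hU, add_zero, add_zero]
    _ ≤ MDP.Pr M (proj M N s₀ hM hN μp) s₀
          {r | (fun n => M.label (r n).1) ∈ N.lang} :=
        Pr_le M N s₀ hM hN μp _
end
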